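/- arXiv:1304.7466 — 2 statements merged into one kernel-verified Lean document; each statement's English description precedes it below -/
import Mathlib

section
/- Let 𝔞 be a 𝒰-graded category and M an 𝔞-bimodule. (1) If 𝒱 ⊆ 𝒰 is a censoring subcategory, i.e. 𝔞_u(A,A') = 0 for every morphism u of 𝒰 not lying in 𝒱, then the restriction φ* : C_𝒰(𝔞, M) → C_𝒱(𝔞^φ, M^φ) along the inclusion φ : 𝒱 ⊆ 𝒰 is an isomorphism of complexes. (2) More generally, if (φ, F) : (𝒱, 𝔟) → (𝒰, 𝔞) is a subcartesian graded functor with 𝒩_1(F) injective which is censoring, in the sense that 𝔞_u(A,A') = 0 for every morphism u : A → A' of 𝒰^♯ not in the image of 𝒩_1(F), then F* : C_𝒰(𝔞, M) → C_𝒱(𝔟, F*M) is an isomorphism of complexes. -/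
open CategoryTheory

universe u

namespace MapGr

variable (k : Type u) [CommRing k]

/-- A (`k`-linear) map-graded category `(𝒰, 𝔞)`: a set `𝔞_U` of objects over every
`U ∈ 𝒰`, a `k`-module `𝔞_u(B, A)` of morphisms over every `u : U ⟶ U'` in `𝒰`, together
with associative, unital, `k`-bilinear composition maps. -/
structure GradedCat (𝒰 : Type u) [Category.{u} 𝒰] : Type (u + 1) where
  Obj : 𝒰 → Type u
  Hom : ∀ {X Y : 𝒰}, (X ⟶ Y) → Obj X → Obj Y → ModuleCat.{u} k
  comp : ∀ {X Y Z : 𝒰} {f : Y ⟶ Z} {g : X ⟶ Y} {C : Obj X} {B : Obj Y} {A : Obj Z},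
    Hom f B A → Hom g C B → Hom (g ≫ f) C A
  id : ∀ {X : 𝒰} (A : Obj X), Hom (𝟙 X) A A
  comp_add_left : ∀ {X Y Z : 𝒰} {f : Y ⟶ Z} {g : X ⟶ Y} {C : Obj X} {B : Obj Y}
    {A : Obj Z} (x x' : Hom f B A) (y : Hom g C B),
    comp (x + x') y = comp x y + comp x' y
  comp_add_right : ∀ {X Y Z : 𝒰} {f : Y ⟶ Z} {g : X ⟶ Y} {C : Obj X} {B : Obj Y}
    {A : Obj Z} (x : Hom f B A) (y y' : Hom g C B),
    comp x (y + y') = comp x y + comp x y'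
  comp_smul_left : ∀ {X Y Z : 𝒰} {f : Y ⟶ Z} {g : X ⟶ Y} {C : Obj X} {B : Obj Y}
    {A : Obj Z} (r : k) (x : Hom f B A) (y : Hom g C B),
    comp (r • x) y = r • comp x y
  comp_smul_right : ∀ {X Y Z : 𝒰} {f : Y ⟶ Z} {g : X ⟶ Y} {C : Obj X} {B : Obj Y}
    {A : Obj Z} (r : k) (x : Hom f B A) (y : Hom g C B),
    comp x (r • y) = r • comp x y
  comp_id : ∀ {X Y : 𝒰} {f : X ⟶ Y} {B : Obj X} {A : Obj Y} (x : Hom f B A),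
    HEq (comp x (id B)) x
  id_comp : ∀ {X Y : 𝒰} {f : X ⟶ Y} {B : Obj X} {A : Obj Y} (x : Hom f B A),
    HEq (comp (id A) x) x
  assoc : ∀ {W X Y Z : 𝒰} {f : Y ⟶ Z} {g : X ⟶ Y} {h : W ⟶ X} {D : Obj W} {C : Obj X}
    {B : Obj Y} {A : Obj Z} (x : Hom f B A) (y : Hom g C B) (z : Hom h D C),
    HEq (comp (comp x y) z) (comp x (comp y z))

variable {k}
variable {𝒰 : Type u} [Category.{u} 𝒰]

namespace GradedCat

variable (𝔞 : GradedCat k 𝒰)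

/-- Transport of graded morphisms along an equality of underlying morphisms of `𝒰`. -/
def Hcast {X Y : 𝒰} {f g : X ⟶ Y} (h : f = g) {B : 𝔞.Obj X} {A : 𝔞.Obj Y}
    (x : 𝔞.Hom f B A) : 𝔞.Hom g B A :=
  _root_.cast (by rw [h]) x

theorem Hcast_heq {X Y : 𝒰} {f g : X ⟶ Y} (h : f = g) {B : 𝔞.Obj X} {A : 𝔞.Obj Y}
    (x : 𝔞.Hom f B A) : HEq (𝔞.Hcast h x) x :=
  cast_heq _ _

theorem Hcast_add {X Y : 𝒰} {f g : X ⟶ Y} (h : f = g) {B : 𝔞.Obj X} {A : 𝔞.Obj Y}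
    (x y : 𝔞.Hom f B A) : 𝔞.Hcast h (x + y) = 𝔞.Hcast h x + 𝔞.Hcast h y := by
  subst h; rfl

theorem Hcast_smul {X Y : 𝒰} {f g : X ⟶ Y} (h : f = g) {B : 𝔞.Obj X} {A : 𝔞.Obj Y}
    (r : k) (x : 𝔞.Hom f B A) : 𝔞.Hcast h (r • x) = r • 𝔞.Hcast h x := by
  subst h; rfl

theorem comp_congr {X Y Z : 𝒰} {f f' : Y ⟶ Z} (hf : f = f') {g g' : X ⟶ Y} (hg : g = g')
    {C : 𝔞.Obj X} {B : 𝔞.Obj Y} {A : 𝔞.Obj Z} {x : 𝔞.Hom f B A} {x' : 𝔞.Hom f' B A}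
    (hx : HEq x x') {y : 𝔞.Hom g C B} {y' : 𝔞.Hom g' C B} (hy : HEq y y') :
    HEq (𝔞.comp x y) (𝔞.comp x' y') := by
  subst hf; subst hg; rw [eq_of_heq hx, eq_of_heq hy]

end GradedCat

variable {𝒱 : Type u} [Category.{u} 𝒱]

/-- The `𝒱`-graded category `𝔞^φ` obtained by restricting a `𝒰`-graded category `𝔞`
along a functor `φ : 𝒱 ⥤ 𝒰`:  `(𝔞^φ)_V = 𝔞_{φ V}` and `(𝔞^φ)_v(A, A') = 𝔞_{φ v}(A, A')`. -/
def GradedCat.restrict (φ : 𝒱 ⥤ 𝒰) (𝔞 : GradedCat k 𝒰) : GradedCat k 𝒱 where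
  Obj V := 𝔞.Obj (φ.obj V)
  Hom f B A := 𝔞.Hom (φ.map f) B A
  comp x y := 𝔞.Hcast (φ.map_comp _ _).symm (𝔞.comp x y)
  id A := 𝔞.Hcast (φ.map_id _).symm (𝔞.id A)
  comp_add_left x x' y := by (try dsimp only); rw [𝔞.comp_add_left, 𝔞.Hcast_add]
  comp_add_right x y y' := by (try dsimp only); rw [𝔞.comp_add_right, 𝔞.Hcast_add]
  comp_smul_left r x y := by (try dsimp only); rw [𝔞.comp_smul_left, 𝔞.Hcast_smul]
  comp_smul_right r x y := by (try dsimp only); rw [𝔞.comp_smul_right, 𝔞.Hcast_smul]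
  comp_id x :=
    ((𝔞.Hcast_heq _ _).trans
      ((𝔞.comp_congr rfl (φ.map_id _) HEq.rfl (𝔞.Hcast_heq _ _)).trans (𝔞.comp_id _)))
  id_comp x :=
    ((𝔞.Hcast_heq _ _).trans
      ((𝔞.comp_congr (φ.map_id _) rfl (𝔞.Hcast_heq _ _) HEq.rfl).trans (𝔞.id_comp _)))
  assoc x y z := by
    refine ((𝔞.Hcast_heq _ _).trans ?_).trans (𝔞.Hcast_heq _ _).symm
    refine ((𝔞.comp_congr (φ.map_comp _ _) rfl (𝔞.Hcast_heq _ _) HEq.rfl).trans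
      (𝔞.assoc _ _ _)).trans ?_
    exact 𝔞.comp_congr rfl (φ.map_comp _ _).symm HEq.rfl (𝔞.Hcast_heq _ _).symm

variable (k)

/-- A graded functor `(φ, F) : (𝒱, 𝔟) → (𝒰, 𝔞)` over a functor `φ : 𝒱 ⥤ 𝒰`: maps
`F_V : 𝔟_V → 𝔞_{φ V}` on objects and `k`-linear maps `𝔟_v(B, B') → 𝔞_{φ v}(F B, F B')`
on graded morphisms, preserving composition and identities. -/
structure GradedFunctor (φ : 𝒱 ⥤ 𝒰) (𝔟 : GradedCat k 𝒱) (𝔞 : GradedCat k 𝒰) :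
    Type u where
  obj : ∀ {V : 𝒱}, 𝔟.Obj V → 𝔞.Obj (φ.obj V)
  map : ∀ {V V' : 𝒱} (f : V ⟶ V') {B : 𝔟.Obj V} {B' : 𝔟.Obj V'},
    𝔟.Hom f B B' → 𝔞.Hom (φ.map f) (obj B) (obj B')
  map_add : ∀ {V V' : 𝒱} (f : V ⟶ V') {B : 𝔟.Obj V} {B' : 𝔟.Obj V'}
    (x y : 𝔟.Hom f B B'), map f (x + y) = map f x + map f y
  map_smul : ∀ {V V' : 𝒱} (f : V ⟶ V') {B : 𝔟.Obj V} {B' : 𝔟.Obj V'} (r : k)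
    (x : 𝔟.Hom f B B'), map f (r • x) = r • map f x
  map_id : ∀ {V : 𝒱} (B : 𝔟.Obj V), HEq (map (𝟙 V) (𝔟.id B)) (𝔞.id (obj B))
  map_comp : ∀ {V V' V'' : 𝒱} {f : V' ⟶ V''} {g : V ⟶ V'} {C : 𝔟.Obj V} {B : 𝔟.Obj V'}
    {A : 𝔟.Obj V''} (x : 𝔟.Hom f B A) (y : 𝔟.Hom g C B),
    HEq (map (g ≫ f) (𝔟.comp x y)) (𝔞.comp (map f x) (map g y))

variable {k}

namespace GradedFunctor

variable {φ : 𝒱 ⥤ 𝒰} {𝔟 : GradedCat k 𝒱} {𝔞 : GradedCat k 𝒰}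

theorem map_congr (F : GradedFunctor k φ 𝔟 𝔞) {V V' : 𝒱} {f g : V ⟶ V'} (hfg : f = g)
    {B : 𝔟.Obj V} {B' : 𝔟.Obj V'} {x : 𝔟.Hom f B B'} {y : 𝔟.Hom g B B'} (h : HEq x y) :
    HEq (F.map f x) (F.map g y) := by
  subst hfg; rw [eq_of_heq h]

/-- A graded functor is subcartesian (cartesian with respect to `Map → Mas`) iff all its
maps between graded `Hom`-modules are bijective. -/
def Subcartesian (F : GradedFunctor k φ 𝔟 𝔞) : Prop :=
  ∀ {V V' : 𝒱} (f : V ⟶ V') (B : 𝔟.Obj V) (B' : 𝔟.Obj V'),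
    Function.Bijective (fun x : 𝔟.Hom f B B' => F.map f x)

variable {𝒲 : Type u} [Category.{u} 𝒲] {ψ : 𝒲 ⥤ 𝒱} {𝔠 : GradedCat k 𝒲}

/-- Composition of graded functors. -/
def comp (F : GradedFunctor k φ 𝔟 𝔞) (G : GradedFunctor k ψ 𝔠 𝔟) :
    GradedFunctor k (ψ ⋙ φ) 𝔠 𝔞 where
  obj C := F.obj (G.obj C)
  map := fun {V V'} f {B B'} x => F.map (ψ.map f) (G.map f x)
  map_add := by intro V V' f B B' x y; (try dsimp only); rw [G.map_add, F.map_add]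
  map_smul := by intro V V' f B B' r x; (try dsimp only); rw [G.map_smul, F.map_smul]
  map_id B := (F.map_congr (ψ.map_id _) (G.map_id _)).trans (F.map_id _)
  map_comp x y := (F.map_congr (ψ.map_comp _ _) (G.map_comp _ _)).trans (F.map_comp _ _)

end GradedFunctor

/-- The canonical cartesian graded functor `δ^{φ,𝔞} : (𝒱, 𝔞^φ) → (𝒰, 𝔞)`. -/
def restrictProj (φ : 𝒱 ⥤ 𝒰) (𝔞 : GradedCat k 𝒰) :
    GradedFunctor k φ (𝔞.restrict φ) 𝔞 where
  obj A := A
  map := fun {V V'} _f {B B'} x => x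
  map_add := by intros; rfl
  map_smul := by intros; rfl
  map_id B := 𝔞.Hcast_heq (φ.map_id _).symm (𝔞.id B)
  map_comp x y := 𝔞.Hcast_heq (φ.map_comp _ _).symm (𝔞.comp x y)

theorem restrictProj_subcartesian (φ : 𝒱 ⥤ 𝒰) (𝔞 : GradedCat k 𝒰) :
    (restrictProj φ 𝔞).Subcartesian := by
  intro V V' f B B'
  constructor
  · intro a b h
    exact h
  · intro y
    exact ⟨y, rfl⟩

end MapGr

namespace MapGr

variable {k : Type u} [CommRing k]
variable {𝒰 : Type u} [Category.{u} 𝒰]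

/-- The category `𝒰^♯` associated to a `𝒰`-graded category `𝔞`: objects are pairs
`(U, A)` with `A ∈ 𝔞_U`, and morphisms `(U, A) → (U', A')` are the morphisms `U ⟶ U'`
of `𝒰`. -/
def Sh (𝔞 : GradedCat k 𝒰) : Type u := Σ X : 𝒰, 𝔞.Obj X

instance (𝔞 : GradedCat k 𝒰) : Category.{u} (Sh 𝔞) where
  Hom A B := A.1 ⟶ B.1
  id A := 𝟙 A.1
  comp f g := f ≫ g
  id_comp := by intros; simp
  comp_id := by intros; simp
  assoc := by intros; simp

/-- The underlying morphism of `𝒰` of a morphism of `𝒰^♯`. -/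
def Sh.base {𝔞 : GradedCat k 𝒰} {A B : Sh 𝔞} (f : A ⟶ B) : A.1 ⟶ B.1 := f

@[simp] theorem Sh.base_id {𝔞 : GradedCat k 𝒰} (A : Sh 𝔞) :
    Sh.base (𝟙 A) = 𝟙 A.1 := rfl

@[simp] theorem Sh.base_comp {𝔞 : GradedCat k 𝒰} {A B C : Sh 𝔞} (f : A ⟶ B) (g : B ⟶ C) :
    Sh.base (f ≫ g) = Sh.base f ≫ Sh.base g := rfl

/-- `n`-simplices of the simplicial nerve of a category with specified endpoints:
strings `X = X₀ → X₁ → ⋯ → Xₙ = Y` of `n` composable morphisms. -/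
inductive Pth (C : Type u) [Category.{u} C] : ℕ → C → C → Type u
  | nil (X : C) : Pth C 0 X X
  | cons {n : ℕ} {X Y Z : C} (f : X ⟶ Y) (p : Pth C n Y Z) : Pth C (n + 1) X Z

/-- The composite `|u| = uₙ₋₁ ⋯ u₁ u₀` of a string of composable morphisms. -/
def Pth.comp {C : Type u} [Category.{u} C] : ∀ {n : ℕ} {X Y : C}, Pth C n X Y → (X ⟶ Y)
  | _, _, _, .nil X => 𝟙 X
  | _, _, _, .cons f p => f ≫ p.comp

@[simp] theorem Pth.comp_nil {C : Type u} [Category.{u} C] (X : C) :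
    (Pth.nil X).comp = 𝟙 X := rfl

@[simp] theorem Pth.comp_cons {C : Type u} [Category.{u} C] {n : ℕ} {X Y Z : C}
    (f : X ⟶ Y) (p : Pth C n Y Z) : (Pth.cons f p).comp = f ≫ p.comp := rfl

/-- The map induced by a functor on simplices of the nerves. -/
def Pth.map {C D : Type u} [Category.{u} C] [Category.{u} D] (F : C ⥤ D) :
    ∀ {n : ℕ} {X Y : C}, Pth C n X Y → Pth D n (F.obj X) (F.obj Y)
  | _, _, _, .nil X => .nil _
  | _, _, _, .cons f p => .cons (F.map f) (p.map F)

theorem Pth.comp_map {C D : Type u} [Category.{u} C] [Category.{u} D] (F : C ⥤ D)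
    {n : ℕ} {X Y : C} (p : Pth C n X Y) : (p.map F).comp = F.map p.comp := by
  induction p with
  | nil => simp [Pth.map]
  | cons f p ih => simp [Pth.map, ih]

/-- The set of `n`-simplices of the nerve `𝒩(𝔞) = 𝒩(𝒰^♯)` of a graded category. -/
def NerveTot (C : Type u) [Category.{u} C] (m : ℕ) : Type u :=
  Σ (X : C) (Y : C), Pth C m X Y

/-- The map induced by a functor on the set of `n`-simplices of the nerves. -/
def NerveTot.map {C D : Type u} [Category.{u} C] [Category.{u} D] (F : C ⥤ D) {m : ℕ}
    (s : NerveTot C m) : NerveTot D m :=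
  ⟨F.obj s.1, F.obj s.2.1, Pth.map F s.2.2⟩

/-- A family of elements of the graded `Hom`-modules of `𝔞` lying over a simplex of the
nerve of `𝔞`. -/
inductive PthElts {k : Type u} [CommRing k] {𝒰 : Type u} [Category.{u} 𝒰]
    (𝔞 : GradedCat k 𝒰) : ∀ {n : ℕ} {X Y : Sh 𝔞}, Pth (Sh 𝔞) n X Y → Type u
  | nil (X : Sh 𝔞) : PthElts 𝔞 (Pth.nil X)
  | cons {n : ℕ} {X Y Z : Sh 𝔞} {f : X ⟶ Y} {p : Pth (Sh 𝔞) n Y Z}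
      (x : 𝔞.Hom (Sh.base f) X.2 Y.2) (e : PthElts 𝔞 p) : PthElts 𝔞 (Pth.cons f p)

variable (k)

/-- An `𝔞`-bimodule `M`: `k`-modules `M_u(B, A)` together with associative, unital,
`k`-bilinear left and right actions of `𝔞`. -/
structure Bimod {𝒰 : Type u} [Category.{u} 𝒰] (𝔞 : GradedCat k 𝒰) : Type (u + 1) where
  M : ∀ {X Y : 𝒰}, (X ⟶ Y) → 𝔞.Obj X → 𝔞.Obj Y → ModuleCat.{u} k
  actL : ∀ {X Y Z : 𝒰} {f : Y ⟶ Z} {g : X ⟶ Y} {B : 𝔞.Obj X} {A : 𝔞.Obj Y}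
    {A' : 𝔞.Obj Z}, 𝔞.Hom f A A' → M g B A → M (g ≫ f) B A'
  actR : ∀ {X Y Z : 𝒰} {f : Y ⟶ Z} {g : X ⟶ Y} {B' : 𝔞.Obj X} {B : 𝔞.Obj Y}
    {A : 𝔞.Obj Z}, M f B A → 𝔞.Hom g B' B → M (g ≫ f) B' A
  actL_add_left : ∀ {X Y Z : 𝒰} {f : Y ⟶ Z} {g : X ⟶ Y} {B : 𝔞.Obj X} {A : 𝔞.Obj Y}
    {A' : 𝔞.Obj Z} (x x' : 𝔞.Hom f A A') (m : M g B A),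
    actL (x + x') m = actL x m + actL x' m
  actL_add_right : ∀ {X Y Z : 𝒰} {f : Y ⟶ Z} {g : X ⟶ Y} {B : 𝔞.Obj X} {A : 𝔞.Obj Y}
    {A' : 𝔞.Obj Z} (x : 𝔞.Hom f A A') (m m' : M g B A),
    actL x (m + m') = actL x m + actL x m'
  actL_smul_left : ∀ {X Y Z : 𝒰} {f : Y ⟶ Z} {g : X ⟶ Y} {B : 𝔞.Obj X} {A : 𝔞.Obj Y}
    {A' : 𝔞.Obj Z} (r : k) (x : 𝔞.Hom f A A') (m : M g B A),
    actL (r • x) m = r • actL x m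
  actL_smul_right : ∀ {X Y Z : 𝒰} {f : Y ⟶ Z} {g : X ⟶ Y} {B : 𝔞.Obj X} {A : 𝔞.Obj Y}
    {A' : 𝔞.Obj Z} (r : k) (x : 𝔞.Hom f A A') (m : M g B A),
    actL x (r • m) = r • actL x m
  actR_add_left : ∀ {X Y Z : 𝒰} {f : Y ⟶ Z} {g : X ⟶ Y} {B' : 𝔞.Obj X} {B : 𝔞.Obj Y}
    {A : 𝔞.Obj Z} (m m' : M f B A) (y : 𝔞.Hom g B' B),
    actR (m + m') y = actR m y + actR m' y
  actR_add_right : ∀ {X Y Z : 𝒰} {f : Y ⟶ Z} {g : X ⟶ Y} {B' : 𝔞.Obj X} {B : 𝔞.Obj Y}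
    {A : 𝔞.Obj Z} (m : M f B A) (y y' : 𝔞.Hom g B' B),
    actR m (y + y') = actR m y + actR m y'
  actR_smul_left : ∀ {X Y Z : 𝒰} {f : Y ⟶ Z} {g : X ⟶ Y} {B' : 𝔞.Obj X} {B : 𝔞.Obj Y}
    {A : 𝔞.Obj Z} (r : k) (m : M f B A) (y : 𝔞.Hom g B' B),
    actR (r • m) y = r • actR m y
  actR_smul_right : ∀ {X Y Z : 𝒰} {f : Y ⟶ Z} {g : X ⟶ Y} {B' : 𝔞.Obj X} {B : 𝔞.Obj Y}
    {A : 𝔞.Obj Z} (r : k) (m : M f B A) (y : 𝔞.Hom g B' B),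
    actR m (r • y) = r • actR m y
  actL_id : ∀ {X Y : 𝒰} {g : X ⟶ Y} {B : 𝔞.Obj X} {A : 𝔞.Obj Y} (m : M g B A),
    HEq (actL (𝔞.id A) m) m
  actR_id : ∀ {X Y : 𝒰} {f : X ⟶ Y} {B : 𝔞.Obj X} {A : 𝔞.Obj Y} (m : M f B A),
    HEq (actR m (𝔞.id B)) m
  actL_actL : ∀ {W X Y Z : 𝒰} {f' : Y ⟶ Z} {f : X ⟶ Y} {g : W ⟶ X} {B : 𝔞.Obj W}
    {A : 𝔞.Obj X} {A' : 𝔞.Obj Y} {A'' : 𝔞.Obj Z} (x : 𝔞.Hom f' A' A'')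
    (y : 𝔞.Hom f A A') (m : M g B A),
    HEq (actL x (actL y m)) (actL (𝔞.comp x y) m)
  actR_actR : ∀ {W X Y Z : 𝒰} {f : Y ⟶ Z} {g : X ⟶ Y} {h : W ⟶ X} {B'' : 𝔞.Obj W}
    {B' : 𝔞.Obj X} {B : 𝔞.Obj Y} {A : 𝔞.Obj Z} (m : M f B A) (y : 𝔞.Hom g B' B)
    (y' : 𝔞.Hom h B'' B'),
    HEq (actR (actR m y) y') (actR m (𝔞.comp y y'))
  actL_actR : ∀ {W X Y Z : 𝒰} {f : Y ⟶ Z} {g : X ⟶ Y} {h : W ⟶ X} {B' : 𝔞.Obj W}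
    {B : 𝔞.Obj X} {A : 𝔞.Obj Y} {A' : 𝔞.Obj Z} (x : 𝔞.Hom f A A') (m : M g B A)
    (y : 𝔞.Hom h B' B),
    HEq (actL x (actR m y)) (actR (actL x m) y)

variable {k}

namespace Bimod

variable {𝔞 : GradedCat k 𝒰} (M : Bimod k 𝔞)

/-- Transport of bimodule elements along an equality of underlying morphisms of `𝒰`. -/
def cst {X Y : 𝒰} {f g : X ⟶ Y} (h : f = g) {B : 𝔞.Obj X} {A : 𝔞.Obj Y}
    (m : M.M f B A) : M.M g B A :=
  _root_.cast (by rw [h]) m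

theorem cst_heq {X Y : 𝒰} {f g : X ⟶ Y} (h : f = g) {B : 𝔞.Obj X} {A : 𝔞.Obj Y}
    (m : M.M f B A) : HEq (M.cst h m) m :=
  cast_heq _ _

theorem cst_add {X Y : 𝒰} {f g : X ⟶ Y} (h : f = g) {B : 𝔞.Obj X} {A : 𝔞.Obj Y}
    (m m' : M.M f B A) : M.cst h (m + m') = M.cst h m + M.cst h m' := by
  subst h; rfl

theorem cst_smul {X Y : 𝒰} {f g : X ⟶ Y} (h : f = g) {B : 𝔞.Obj X} {A : 𝔞.Obj Y}
    (r : k) (m : M.M f B A) : M.cst h (r • m) = r • M.cst h m := by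
  subst h; rfl

theorem actL_congr {X Y Z : 𝒰} {f f' : Y ⟶ Z} (hf : f = f') {g g' : X ⟶ Y}
    (hg : g = g') {B : 𝔞.Obj X} {A : 𝔞.Obj Y} {A' : 𝔞.Obj Z} {x : 𝔞.Hom f A A'}
    {x' : 𝔞.Hom f' A A'} (hx : HEq x x') {m : M.M g B A} {m' : M.M g' B A}
    (hm : HEq m m') : HEq (M.actL x m) (M.actL x' m') := by
  subst hf; subst hg; rw [eq_of_heq hx, eq_of_heq hm]

theorem actR_congr {X Y Z : 𝒰} {f f' : Y ⟶ Z} (hf : f = f') {g g' : X ⟶ Y}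
    (hg : g = g') {B' : 𝔞.Obj X} {B : 𝔞.Obj Y} {A : 𝔞.Obj Z} {m : M.M f B A}
    {m' : M.M f' B A} (hm : HEq m m') {y : 𝔞.Hom g B' B} {y' : 𝔞.Hom g' B' B}
    (hy : HEq y y') : HEq (M.actR m y) (M.actR m' y') := by
  subst hf; subst hg; rw [eq_of_heq hm, eq_of_heq hy]

end Bimod

/-- The identity bimodule `1_𝔞`. -/
def GradedCat.unit (𝔞 : GradedCat k 𝒰) : Bimod k 𝔞 where
  M := 𝔞.Hom
  actL := 𝔞.comp
  actR := 𝔞.comp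
  actL_add_left := 𝔞.comp_add_left
  actL_add_right := 𝔞.comp_add_right
  actL_smul_left := 𝔞.comp_smul_left
  actL_smul_right := 𝔞.comp_smul_right
  actR_add_left := 𝔞.comp_add_left
  actR_add_right := 𝔞.comp_add_right
  actR_smul_left := 𝔞.comp_smul_left
  actR_smul_right := 𝔞.comp_smul_right
  actL_id := 𝔞.id_comp
  actR_id := 𝔞.comp_id
  actL_actL x y m := (𝔞.assoc x y m).symm
  actR_actR m y y' := 𝔞.assoc m y y'
  actL_actR x m y := (𝔞.assoc x m y).symm

variable {𝒱 : Type u} [Category.{u} 𝒱]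

/-- The pullback `F*M` of an `𝔞`-bimodule along a graded functor
`(φ, F) : (𝒱, 𝔟) → (𝒰, 𝔞)`: `(F*M)_v(B, B') = M_{φ v}(F B, F B')`. -/
def Bimod.pullback {φ : 𝒱 ⥤ 𝒰} {𝔟 : GradedCat k 𝒱} {𝔞 : GradedCat k 𝒰}
    (F : GradedFunctor k φ 𝔟 𝔞) (M : Bimod k 𝔞) : Bimod k 𝔟 where
  M f B B' := M.M (φ.map f) (F.obj B) (F.obj B')
  actL := fun {X Y Z f g B A A'} x m =>
    M.cst (φ.map_comp g f).symm (M.actL (F.map f x) m)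
  actR := fun {X Y Z f g B' B A} m y =>
    M.cst (φ.map_comp g f).symm (M.actR m (F.map g y))
  actL_add_left := by
    intros; (try dsimp only); rw [F.map_add, M.actL_add_left, M.cst_add]
  actL_add_right := by
    intros; (try dsimp only); rw [M.actL_add_right, M.cst_add]
  actL_smul_left := by
    intros; (try dsimp only); rw [F.map_smul, M.actL_smul_left, M.cst_smul]
  actL_smul_right := by
    intros; (try dsimp only); rw [M.actL_smul_right, M.cst_smul]
  actR_add_left := by
    intros; (try dsimp only); rw [M.actR_add_left, M.cst_add]
  actR_add_right := by
    intros; (try dsimp only); rw [F.map_add, M.actR_add_right, M.cst_add]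
  actR_smul_left := by
    intros; (try dsimp only); rw [M.actR_smul_left, M.cst_smul]
  actR_smul_right := by
    intros; (try dsimp only); rw [F.map_smul, M.actR_smul_right, M.cst_smul]
  actL_id := by
    intro X Y g B A m; (try dsimp only)
    exact (M.cst_heq _ _).trans
      ((M.actL_congr (φ.map_id _) rfl (F.map_id _) HEq.rfl).trans (M.actL_id m))
  actR_id := by
    intro X Y f B A m; (try dsimp only)
    exact (M.cst_heq _ _).trans
      ((M.actR_congr rfl (φ.map_id _) HEq.rfl (F.map_id _)).trans (M.actR_id m))
  actL_actL := by
    intro W X Y Z f' f g B A A' A'' x y m; (try dsimp only)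
    refine ((M.cst_heq _ _).trans ?_).trans (M.cst_heq _ _).symm
    refine ((M.actL_congr rfl (φ.map_comp _ _) HEq.rfl (M.cst_heq _ _)).trans
      (M.actL_actL _ _ _)).trans ?_
    exact M.actL_congr (φ.map_comp _ _).symm rfl (F.map_comp _ _).symm HEq.rfl
  actR_actR := by
    intro W X Y Z f g h B'' B' B A m y y'; (try dsimp only)
    refine ((M.cst_heq _ _).trans ?_).trans (M.cst_heq _ _).symm
    refine ((M.actR_congr (φ.map_comp _ _) rfl (M.cst_heq _ _) HEq.rfl).trans
      (M.actR_actR _ _ _)).trans ?_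
    exact M.actR_congr rfl (φ.map_comp _ _).symm HEq.rfl (F.map_comp _ _).symm
  actL_actR := by
    intro W X Y Z f g h B' B A A' x m y; (try dsimp only)
    refine ((M.cst_heq _ _).trans ?_).trans (M.cst_heq _ _).symm
    refine ((M.actL_congr rfl (φ.map_comp _ _) HEq.rfl (M.cst_heq _ _)).trans
      (M.actL_actR _ _ _)).trans ?_
    exact M.actR_congr (φ.map_comp _ _).symm rfl (M.cst_heq _ _).symm HEq.rfl

/-- The functor `𝒱^♯ ⥤ 𝒰^♯` induced by a graded functor. -/
def sharpF {φ : 𝒱 ⥤ 𝒰} {𝔟 : GradedCat k 𝒱} {𝔞 : GradedCat k 𝒰}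
    (F : GradedFunctor k φ 𝔟 𝔞) : Sh 𝔟 ⥤ Sh 𝔞 where
  obj X := ⟨φ.obj X.1, F.obj X.2⟩
  map {X Y} f := φ.map (Sh.base f)
  map_id X := φ.map_id X.1
  map_comp f g := φ.map_comp _ _

/-- The map induced by a graded functor on families of elements over simplices. -/
def eltsMap {φ : 𝒱 ⥤ 𝒰} {𝔟 : GradedCat k 𝒱} {𝔞 : GradedCat k 𝒰}
    (F : GradedFunctor k φ 𝔟 𝔞) :
    ∀ {n : ℕ} {X Y : Sh 𝔟} {p : Pth (Sh 𝔟) n X Y},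
      PthElts 𝔟 p → PthElts 𝔞 (p.map (sharpF F))
  | _, _, _, _, .nil X => .nil _
  | _, _, _, _, .cons x e => .cons (F.map _ x) (eltsMap F e)

/-- The module of raw Hochschild `n`-cochains of `(𝒰, 𝔞)` with values in an
`𝔞`-bimodule `M`: families, indexed by the `n`-simplices `(u, A)` of `𝒩(𝔞)`, of maps
`𝔞_{u_{n-1}} ⊗ ⋯ ⊗ 𝔞_{u_0} → M_{|u|}(A₀, Aₙ)` (multilinearity is the separate
predicate `IsCochain`). -/
abbrev RawCochain {𝔞 : GradedCat k 𝒰} (M : Bimod k 𝔞) (n : ℕ) : Type u :=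
  ∀ (X Y : Sh 𝔞) (p : Pth (Sh 𝔞) n X Y), PthElts 𝔞 p → M.M (Sh.base p.comp) X.2 Y.2

/-- Restriction of Hochschild cochains along a graded functor, with values in the
pullback bimodule: `(F*ψ)_{(v,B)} = ψ_{(φ v, F B)} ∘ F^{⊗n}`. -/
def Fstar {φ : 𝒱 ⥤ 𝒰} {𝔟 : GradedCat k 𝒱} {𝔞 : GradedCat k 𝒰}
    (F : GradedFunctor k φ 𝔟 𝔞) (M : Bimod k 𝔞) {n : ℕ} (c : RawCochain M n) :
    RawCochain (Bimod.pullback F M) n :=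
  fun X Y p e =>
    M.cst (by rw [Pth.comp_map]; rfl) (c _ _ (p.map (sharpF F)) (eltsMap F e))

/-- Restriction of Hochschild cochains (with values in the identity bimodules) along a
subcartesian graded functor: `(F*ψ)_{(v,B)} = F⁻¹ ∘ ψ_{(φ v, F B)} ∘ F^{⊗n}`. -/
noncomputable def FstarUnit {φ : 𝒱 ⥤ 𝒰} {𝔟 : GradedCat k 𝒱} {𝔞 : GradedCat k 𝒰}
    (F : GradedFunctor k φ 𝔟 𝔞) (hF : F.Subcartesian) {n : ℕ}
    (c : RawCochain 𝔞.unit n) : RawCochain 𝔟.unit n :=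
  fun X Y p e =>
    (Equiv.ofBijective _ (hF (Sh.base p.comp) X.2 Y.2)).symm
      ((𝔞.unit).cst (by rw [Pth.comp_map]; rfl) (c _ _ (p.map (sharpF F)) (eltsMap F e)))

section Multilinear

variable {𝔞 : GradedCat k 𝒰} (M : Bimod k 𝔞)

/-- The multilinearity predicate for (relative) Hochschild cochains: additivity and
`k`-homogeneity in the first slot, and, recursively, multilinearity of all partial
evaluations. -/
def IsML : ∀ {n : ℕ} {W : 𝒰} {B : 𝔞.Obj W} {Y : Sh 𝔞} {v : W ⟶ Y.1},
    (∀ (Z : Sh 𝔞) (q : Pth (Sh 𝔞) n Y Z), PthElts 𝔞 q →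
      M.M (v ≫ Sh.base q.comp) B Z.2) → Prop
  | 0, _, _, _, _, _ => True
  | n + 1, W, B, Y, v, c =>
      (∀ (Y' Z : Sh 𝔞) (a : Y ⟶ Y') (q : Pth (Sh 𝔞) n Y' Z) (e : PthElts 𝔞 q)
        (x x' : 𝔞.Hom (Sh.base a) Y.2 Y'.2),
        c Z (.cons a q) (.cons (x + x') e) =
          c Z (.cons a q) (.cons x e) + c Z (.cons a q) (.cons x' e)) ∧
      (∀ (Y' Z : Sh 𝔞) (a : Y ⟶ Y') (q : Pth (Sh 𝔞) n Y' Z) (e : PthElts 𝔞 q) (r : k)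
        (x : 𝔞.Hom (Sh.base a) Y.2 Y'.2),
        c Z (.cons a q) (.cons (r • x) e) = r • c Z (.cons a q) (.cons x e)) ∧
      (∀ (Y' : Sh 𝔞) (a : Y ⟶ Y') (x : 𝔞.Hom (Sh.base a) Y.2 Y'.2),
        IsML (v := v ≫ Sh.base a)
          (fun Z q e => M.cst (by simp) (c Z (.cons a q) (.cons x e))))

/-- A raw cochain, viewed as a relative cochain. -/
def toRel {n : ℕ} (c : RawCochain M n) (X : Sh 𝔞) :
    ∀ (Z : Sh 𝔞) (q : Pth (Sh 𝔞) n X Z), PthElts 𝔞 q →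
      M.M (𝟙 X.1 ≫ Sh.base q.comp) X.2 Z.2 :=
  fun Z q e => M.cst (by simp) (c X Z q e)

/-- A raw cochain is a genuine Hochschild cochain if it is multilinear. -/
def IsCochain {n : ℕ} (c : RawCochain M n) : Prop :=
  ∀ X : Sh 𝔞, IsML M (toRel M c X)

end Multilinear

section Differential

variable {𝔞 : GradedCat k 𝒰}

/-- The inductive core of the Hochschild differential: `χ` is the relative cochain with
the already-consumed prefix applied, and `G` records the evaluation with the last
morphism of the prefix composed into the first remaining slot (initially, the right
action on the source). -/
def hochD (M : Bimod k 𝔞) {W : 𝒰} (B : 𝔞.Obj W) :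
    ∀ {m : ℕ} {Y Z : Sh 𝔞} (v : W ⟶ Y.1)
      (χ : ∀ (Z' : Sh 𝔞) (q : Pth (Sh 𝔞) m Y Z'), PthElts 𝔞 q →
        M.M (v ≫ Sh.base q.comp) B Z'.2)
      (G : ∀ (Y' Z' : Sh 𝔞) (c : Y ⟶ Y') (z : 𝔞.Hom (Sh.base c) Y.2 Y'.2)
        (q : Pth (Sh 𝔞) m Y' Z'), PthElts 𝔞 q →
        M.M (v ≫ (Sh.base c ≫ Sh.base q.comp)) B Z'.2)
      (p : Pth (Sh 𝔞) (m + 1) Y Z) (e : PthElts 𝔞 p),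
      M.M (v ≫ Sh.base p.comp) B Z.2
  | 0, Y, Z, v, χ, G, .cons a (.nil _), .cons x e' =>
      G _ _ a x (.nil _) e' - M.cst (by simp) (M.actL x (χ _ (.nil _) (.nil _)))
  | m + 1, Y, Z, v, χ, G, .cons a q, .cons x e' =>
      G _ _ a x q e' -
        M.cst (by simp)
          (hochD M B (v ≫ Sh.base a)
            (fun Z' r er => M.cst (by simp) (χ Z' (.cons a r) (.cons x er)))
            (fun Y'' Z' c z r er =>
              M.cst (by simp) (χ Z' (.cons (a ≫ c) r) (.cons (𝔞.comp z x) er)))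
            q e')

/-- The simplicial Hochschild differential on raw cochains. -/
def dRaw (M : Bimod k 𝔞) {n : ℕ} (c : RawCochain M n) : RawCochain M (n + 1) :=
  fun X Z p e =>
    M.cst (by simp)
      (hochD M X.2 (𝟙 X.1)
        (fun Z' q eq => M.cst (by simp) (c X Z' q eq))
        (fun Y' Z' a z q eq => M.cst (by simp) (M.actR (c Y' Z' q eq) z))
        p e)

end Differential

end MapGr

namespace MapGr

variable {k : Type u} [CommRing k]
variable {𝒰 : Type u} [Category.{u} 𝒰]

/-- A subcategory of `𝒰`: a class of objects and a class of morphisms, closed under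
identities and composition. -/
structure Subcat (𝒰 : Type u) [Category.{u} 𝒰] where
  objs : 𝒰 → Prop
  homs : ∀ {X Y : 𝒰}, (X ⟶ Y) → Prop
  dom_mem : ∀ {X Y : 𝒰} (f : X ⟶ Y), homs f → objs X
  cod_mem : ∀ {X Y : 𝒰} (f : X ⟶ Y), homs f → objs Y
  id_mem : ∀ X : 𝒰, objs X → homs (𝟙 X)
  comp_mem : ∀ {X Y Z : 𝒰} (f : X ⟶ Y) (g : Y ⟶ Z), homs f → homs g → homs (f ≫ g)

/-- The category carried by a subcategory. -/
def Subcat.Cat (𝒮 : Subcat 𝒰) : Type u := { X : 𝒰 // 𝒮.objs X }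

instance (𝒮 : Subcat 𝒰) : Category.{u} 𝒮.Cat where
  Hom A B := { f : A.1 ⟶ B.1 // 𝒮.homs f }
  id A := ⟨𝟙 A.1, 𝒮.id_mem A.1 A.2⟩
  comp f g := ⟨f.1 ≫ g.1, 𝒮.comp_mem _ _ f.2 g.2⟩
  id_comp f := by apply Subtype.ext; simp
  comp_id f := by apply Subtype.ext; simp
  assoc f g h := by apply Subtype.ext; simp

/-- The inclusion functor of a subcategory. -/
def Subcat.incl (𝒮 : Subcat 𝒰) : 𝒮.Cat ⥤ 𝒰 where
  obj A := A.1
  map f := f.1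
  map_id _ := rfl
  map_comp _ _ := rfl

/-- The intersection `𝒱₁ ∩ 𝒱₂` of two subcategories. -/
def Subcat.inter (𝒮 𝒯 : Subcat 𝒰) : Subcat 𝒰 where
  objs X := 𝒮.objs X ∧ 𝒯.objs X
  homs f := 𝒮.homs f ∧ 𝒯.homs f
  dom_mem f h := ⟨𝒮.dom_mem f h.1, 𝒯.dom_mem f h.2⟩
  cod_mem f h := ⟨𝒮.cod_mem f h.1, 𝒯.cod_mem f h.2⟩
  id_mem X h := ⟨𝒮.id_mem X h.1, 𝒯.id_mem X h.2⟩
  comp_mem f g h h' := ⟨𝒮.comp_mem f g h.1 h'.1, 𝒯.comp_mem f g h.2 h'.2⟩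

/-- The inclusion `𝒱₁ ∩ 𝒱₂ ⊆ 𝒱₁`. -/
def Subcat.interFst (𝒮 𝒯 : Subcat 𝒰) : (𝒮.inter 𝒯).Cat ⥤ 𝒮.Cat where
  obj A := ⟨A.1, A.2.1⟩
  map f := ⟨f.1, f.2.1⟩
  map_id _ := rfl
  map_comp _ _ := rfl

/-- The inclusion `𝒱₁ ∩ 𝒱₂ ⊆ 𝒱₂`. -/
def Subcat.interSnd (𝒮 𝒯 : Subcat 𝒰) : (𝒮.inter 𝒯).Cat ⥤ 𝒯.Cat where
  obj A := ⟨A.1, A.2.2⟩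
  map f := ⟨f.1, f.2.2⟩
  map_id _ := rfl
  map_comp _ _ := rfl

/-- The canonical (cartesian) graded functor
`(𝒱₁ ∩ 𝒱₂, 𝔞^φ) → (𝒱₁, 𝔞^{φ₁})` over the inclusion `𝒱₁ ∩ 𝒱₂ ⊆ 𝒱₁`. -/
def interRes₁ (𝒮 𝒯 : Subcat 𝒰) (𝔞 : GradedCat k 𝒰) :
    GradedFunctor k (Subcat.interFst 𝒮 𝒯) (𝔞.restrict (𝒮.inter 𝒯).incl)
      (𝔞.restrict 𝒮.incl) where
  obj {V} B := B
  map := fun {V V'} _f {B B'} x => x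
  map_add := by intros; rfl
  map_smul := by intros; rfl
  map_id := by
    intro V B
    exact (𝔞.Hcast_heq ((𝒮.inter 𝒯).incl.map_id V).symm (𝔞.id B)).trans
      (𝔞.Hcast_heq (𝒮.incl.map_id ((Subcat.interFst 𝒮 𝒯).obj V)).symm (𝔞.id B)).symm
  map_comp := by
    intro V V' V'' f g C B A x y
    exact (𝔞.Hcast_heq ((𝒮.inter 𝒯).incl.map_comp g f).symm (𝔞.comp x y)).trans
      (𝔞.Hcast_heq (𝒮.incl.map_comp ((Subcat.interFst 𝒮 𝒯).map g)
        ((Subcat.interFst 𝒮 𝒯).map f)).symm (𝔞.comp x y)).symm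

/-- The canonical (cartesian) graded functor
`(𝒱₁ ∩ 𝒱₂, 𝔞^φ) → (𝒱₂, 𝔞^{φ₂})` over the inclusion `𝒱₁ ∩ 𝒱₂ ⊆ 𝒱₂`. -/
def interRes₂ (𝒮 𝒯 : Subcat 𝒰) (𝔞 : GradedCat k 𝒰) :
    GradedFunctor k (Subcat.interSnd 𝒮 𝒯) (𝔞.restrict (𝒮.inter 𝒯).incl)
      (𝔞.restrict 𝒯.incl) where
  obj {V} B := B
  map := fun {V V'} _f {B B'} x => x
  map_add := by intros; rfl
  map_smul := by intros; rfl
  map_id := by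
    intro V B
    exact (𝔞.Hcast_heq ((𝒮.inter 𝒯).incl.map_id V).symm (𝔞.id B)).trans
      (𝔞.Hcast_heq (𝒯.incl.map_id ((Subcat.interSnd 𝒮 𝒯).obj V)).symm (𝔞.id B)).symm
  map_comp := by
    intro V V' V'' f g C B A x y
    exact (𝔞.Hcast_heq ((𝒮.inter 𝒯).incl.map_comp g f).symm (𝔞.comp x y)).trans
      (𝔞.Hcast_heq (𝒯.incl.map_comp ((Subcat.interSnd 𝒮 𝒯).map g)
        ((Subcat.interSnd 𝒮 𝒯).map f)).symm (𝔞.comp x y)).symm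

theorem interRes₁_subcartesian (𝒮 𝒯 : Subcat 𝒰) (𝔞 : GradedCat k 𝒰) :
    (interRes₁ 𝒮 𝒯 𝔞).Subcartesian := by
  intro V V' f B B'
  exact ⟨fun a b h => h, fun y => ⟨y, rfl⟩⟩

theorem interRes₂_subcartesian (𝒮 𝒯 : Subcat 𝒰) (𝔞 : GradedCat k 𝒰) :
    (interRes₂ 𝒮 𝒯 𝔞).Subcartesian := by
  intro V V' f B B'
  exact ⟨fun a b h => h, fun y => ⟨y, rfl⟩⟩

end MapGr

namespace MapGr

variable {k : Type u} [CommRing k]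
variable {𝒰 : Type u} [Category.{u} 𝒰]

namespace Bimod

variable {𝔞 : GradedCat k 𝒰} (M : Bimod k 𝔞)

theorem cst_zero {X Y : 𝒰} {f g : X ⟶ Y} (h : f = g) {B : 𝔞.Obj X} {A : 𝔞.Obj Y} :
    M.cst h (0 : M.M f B A) = 0 := by subst h; rfl

theorem cst_sub {X Y : 𝒰} {f g : X ⟶ Y} (h : f = g) {B : 𝔞.Obj X} {A : 𝔞.Obj Y}
    (m m' : M.M f B A) : M.cst h (m - m') = M.cst h m - M.cst h m' := by subst h; rfl

theorem cst_inj {X Y : 𝒰} {f g : X ⟶ Y} (h : f = g) {B : 𝔞.Obj X} {A : 𝔞.Obj Y}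
    {m m' : M.M f B A} (hm : M.cst h m = M.cst h m') : m = m' := by
  subst h; exact hm

theorem cst_eq_zero {X Y : 𝒰} {f g : X ⟶ Y} (h : f = g) {B : 𝔞.Obj X} {A : 𝔞.Obj Y}
    {m : M.M f B A} (hm : M.cst h m = 0) : m = 0 := by subst h; exact hm

theorem sub_congr {X Y : 𝒰} {f f' : X ⟶ Y} (h : f = f') {B : 𝔞.Obj X} {A : 𝔞.Obj Y}
    {m m' : M.M f B A} {n n' : M.M f' B A} (hm : HEq m n) (hn : HEq m' n') :
    HEq (m - m') (n - n') := by subst h; rw [eq_of_heq hm, eq_of_heq hn]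

/-- If the unit graded endomorphism module at `B` is trivial, every `M`-module with
source `B` is trivial. -/
theorem zero_of_unit {X : 𝒰} {B : 𝔞.Obj X}
    (h : ∀ x : 𝔞.Hom (𝟙 X) B B, x = 0) {Y : 𝒰} {g : X ⟶ Y} {A : 𝔞.Obj Y}
    (m : M.M g B A) : m = 0 := by
  have h1 : HEq m (M.actR m (𝔞.id B)) := (M.actR_id m).symm
  have h2 : M.actR m (𝔞.id B) = 0 := by
    rw [h (𝔞.id B), show (0 : 𝔞.Hom (𝟙 X) B B) = (0 : k) • 0 by rw [zero_smul],
      M.actR_smul_right, zero_smul]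
  rw [h2] at h1
  have h3 : HEq ((0 : M.M (𝟙 X ≫ g) B A)) ((0 : M.M g B A)) := by
    have h4 := M.cst_heq (Category.id_comp g) (0 : M.M (𝟙 X ≫ g) B A)
    rw [M.cst_zero] at h4
    exact h4.symm
  exact eq_of_heq (h1.trans h3)

/-- Target-unit version of `zero_of_unit`. -/
theorem zero_of_unit' {Y : 𝒰} {A : 𝔞.Obj Y}
    (h : ∀ x : 𝔞.Hom (𝟙 Y) A A, x = 0) {X : 𝒰} {g : X ⟶ Y} {B : 𝔞.Obj X}
    (m : M.M g B A) : m = 0 := by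
  have h1 : HEq m (M.actL (𝔞.id A) m) := (M.actL_id m).symm
  have h2 : M.actL (𝔞.id A) m = 0 := by
    rw [h (𝔞.id A), show (0 : 𝔞.Hom (𝟙 Y) A A) = (0 : k) • 0 by rw [zero_smul],
      M.actL_smul_left, zero_smul]
  rw [h2] at h1
  have h3 : HEq ((0 : M.M (g ≫ 𝟙 Y) B A)) ((0 : M.M g B A)) := by
    have h4 := M.cst_heq (Category.comp_id g) (0 : M.M (g ≫ 𝟙 Y) B A)
    rw [M.cst_zero] at h4
    exact h4.symm
  exact eq_of_heq (h1.trans h3)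

end Bimod

section Vanish

variable {𝔞 : GradedCat k 𝒰} (M : Bimod k 𝔞)

/-- Some element of the family is zero. -/
def hasZero : ∀ {n : ℕ} {X Y : Sh 𝔞} {p : Pth (Sh 𝔞) n X Y}, PthElts 𝔞 p → Prop
  | _, _, _, _, PthElts.nil _ => False
  | _, _, _, _, PthElts.cons x e => x = 0 ∨ hasZero e

/-- A multilinear relative cochain vanishes on families containing a zero element. -/
theorem isML_vanish : ∀ {n : ℕ} {W : 𝒰} {B : 𝔞.Obj W} {Y : Sh 𝔞} {v : W ⟶ Y.1}
    (χ : ∀ (Z : Sh 𝔞) (q : Pth (Sh 𝔞) n Y Z), PthElts 𝔞 q →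
      M.M (v ≫ Sh.base q.comp) B Z.2),
    IsML M χ → ∀ {Z : Sh 𝔞} (q : Pth (Sh 𝔞) n Y Z) (e : PthElts 𝔞 q),
      hasZero e → χ Z q e = 0 := by
  intro n
  induction n with
  | zero =>
    intro W B Y v χ _ Z q e hz
    cases e with
    | nil => exact absurd hz (fun h => h)
  | succ n ih =>
    intro W B Y v χ hχ Z q e hz
    cases e with
    | @cons n X' Y' Z' f p x e =>
      rcases hz with hx | hz
      · subst hx
        have := hχ.2.1 _ _ f p e (0 : k) 0
        rw [zero_smul, zero_smul] at this
        exact this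
      · have h3 := hχ.2.2 _ f x
        have := ih _ h3 p e hz
        exact M.cst_eq_zero _ this

theorem isML_of_zero : ∀ {n : ℕ} {W : 𝒰} {B : 𝔞.Obj W} {Y : Sh 𝔞} {v : W ⟶ Y.1}
    (χ : ∀ (Z : Sh 𝔞) (q : Pth (Sh 𝔞) n Y Z), PthElts 𝔞 q →
      M.M (v ≫ Sh.base q.comp) B Z.2),
    (∀ Z q e, χ Z q e = 0) → IsML M χ := by
  intro n
  induction n with
  | zero => intro _ _ _ _ _ _; trivial
  | succ n ih =>
    intro W B Y v χ h0
    refine ⟨?_, ?_, ?_⟩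
    · intro Y' Z a q e x x'; rw [h0, h0, h0, add_zero]
    · intro Y' Z a q e r x; rw [h0, h0, smul_zero]
    · intro Y' a x
      exact ih _ (fun Z q e => by rw [h0]; exact M.cst_zero _)

end Vanish



section SigmaHelpers

theorem nerveTot_inj {C : Type u} [Category.{u} C] {n : ℕ} {X X' Y Y' : C}
    {p : Pth C n X Y} {p' : Pth C n X' Y'}
    (h : (⟨X, Y, p⟩ : NerveTot C n) = ⟨X', Y', p'⟩) :
    ∃ _ : X = X', ∃ _ : Y = Y', HEq p p' := by
  obtain ⟨h1, h2⟩ := Sigma.mk.inj_iff.mp h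
  subst h1
  obtain ⟨h3, h4⟩ := Sigma.mk.inj_iff.mp (eq_of_heq h2)
  exact ⟨rfl, h3, h4⟩

theorem pth_cons_inj {C : Type u} [Category.{u} C] {n : ℕ} {X Y Y' Z : C}
    {f : X ⟶ Y} {f' : X ⟶ Y'} {p : Pth C n Y Z} {p' : Pth C n Y' Z}
    (h : Pth.cons f p = Pth.cons f' p') : ∃ _ : Y = Y', HEq f f' ∧ HEq p p' := by
  injection h with h1 h2 h3 h4 h5 h6
  exact ⟨h3, h5, h6⟩

theorem consNil_congr {C : Type u} [Category.{u} C] {X Y Y' : C} (hY : Y = Y')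
    {f : X ⟶ Y} {f' : X ⟶ Y'} (hf : HEq f f') :
    HEq (Pth.cons f (Pth.nil Y)) (Pth.cons f' (Pth.nil Y')) := by
  subst hY; rw [eq_of_heq hf]

@[simp] theorem pth_map_nil {C D : Type u} [Category.{u} C] [Category.{u} D]
    (G : C ⥤ D) (X : C) : Pth.map G (Pth.nil X) = Pth.nil (G.obj X) := rfl

@[simp] theorem pth_map_cons {C D : Type u} [Category.{u} C] [Category.{u} D]
    (G : C ⥤ D) {n : ℕ} {X Y Z : C} (f : X ⟶ Y) (p : Pth C n Y Z) :
    Pth.map G (Pth.cons f p) = Pth.cons (G.map f) (Pth.map G p) := rfl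

end SigmaHelpers

section Funct

variable {𝒱 : Type u} [Category.{u} 𝒱] {φ : 𝒱 ⥤ 𝒰} {𝔟 : GradedCat k 𝒱}
  {𝔞 : GradedCat k 𝒰} {F : GradedFunctor k φ 𝔟 𝔞}

theorem idSimplexMap (A : Sh 𝔟) :
    NerveTot.map (sharpF F) ⟨A, A, Pth.cons (𝟙 A) (Pth.nil A)⟩ =
      ⟨(sharpF F).obj A, (sharpF F).obj A,
        Pth.cons (𝟙 ((sharpF F).obj A)) (Pth.nil _)⟩ := by
  show (⟨(sharpF F).obj A, (sharpF F).obj A,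
    Pth.cons ((sharpF F).map (𝟙 A)) (Pth.nil _)⟩ : NerveTot (Sh 𝔞) 1) = _
  rw [(sharpF F).map_id A]

theorem objInj
    (hinj : Function.Injective
      (fun s : NerveTot (Sh 𝔟) 1 => NerveTot.map (sharpF F) s))
    {A A' : Sh 𝔟} (h : (sharpF F).obj A = (sharpF F).obj A') : A = A' := by
  have h2 : NerveTot.map (sharpF F) ⟨A, A, Pth.cons (𝟙 A) (Pth.nil A)⟩ =
      NerveTot.map (sharpF F) ⟨A', A', Pth.cons (𝟙 A') (Pth.nil A')⟩ := by
    rw [idSimplexMap, idSimplexMap]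
    exact congrArg (fun Z : Sh 𝔞 => (⟨Z, Z, Pth.cons (𝟙 Z) (Pth.nil Z)⟩ :
      NerveTot (Sh 𝔞) 1)) h
  exact congrArg (fun s : NerveTot (Sh 𝔟) 1 => s.1) (hinj h2)

theorem mapInj
    (hinj : Function.Injective
      (fun s : NerveTot (Sh 𝔟) 1 => NerveTot.map (sharpF F) s))
    {A A' : Sh 𝔟} {v v' : A ⟶ A'} (h : (sharpF F).map v = (sharpF F).map v') :
    v = v' := by
  have h2 : NerveTot.map (sharpF F) ⟨A, A', Pth.cons v (Pth.nil A')⟩ =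
      NerveTot.map (sharpF F) ⟨A, A', Pth.cons v' (Pth.nil A')⟩ := by
    exact congrArg (fun f => (⟨(sharpF F).obj A, (sharpF F).obj A',
      Pth.cons f (Pth.nil _)⟩ : NerveTot (Sh 𝔞) 1)) h
  obtain ⟨-, -, h3⟩ := nerveTot_inj (hinj h2)
  obtain ⟨-, h4, -⟩ := pth_cons_inj (eq_of_heq h3)
  exact eq_of_heq h4

/-- The head of a family of elements over a `cons` path. -/
def PthElts.head {𝔞 : GradedCat k 𝒰} {n : ℕ} {X Y Z : Sh 𝔞} {f : X ⟶ Y}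
    {p : Pth (Sh 𝔞) n Y Z} : PthElts 𝔞 (Pth.cons f p) → 𝔞.Hom (Sh.base f) X.2 Y.2
  | .cons x _ => x

/-- The tail of a family of elements over a `cons` path. -/
def PthElts.tail {𝔞 : GradedCat k 𝒰} {n : ℕ} {X Y Z : Sh 𝔞} {f : X ⟶ Y}
    {p : Pth (Sh 𝔞) n Y Z} : PthElts 𝔞 (Pth.cons f p) → PthElts 𝔞 p
  | .cons _ e => e

@[simp] theorem PthElts.head_cons {𝔞 : GradedCat k 𝒰} {n : ℕ} {X Y Z : Sh 𝔞}
    {f : X ⟶ Y} {p : Pth (Sh 𝔞) n Y Z} (x : 𝔞.Hom (Sh.base f) X.2 Y.2)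
    (e : PthElts 𝔞 p) : (PthElts.cons x e).head = x := rfl

@[simp] theorem PthElts.tail_cons {𝔞 : GradedCat k 𝒰} {n : ℕ} {X Y Z : Sh 𝔞}
    {f : X ⟶ Y} {p : Pth (Sh 𝔞) n Y Z} (x : 𝔞.Hom (Sh.base f) X.2 Y.2)
    (e : PthElts 𝔞 p) : (PthElts.cons x e).tail = e := rfl

theorem PthElts.eta {𝔞 : GradedCat k 𝒰} {n : ℕ} {X Y Z : Sh 𝔞} {f : X ⟶ Y}
    {p : Pth (Sh 𝔞) n Y Z} (e : PthElts 𝔞 (Pth.cons f p)) :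
    e = PthElts.cons e.head e.tail := by
  cases e; rfl

/-- Lifting families of elements along a subcartesian graded functor. -/
noncomputable def eltsLift (hF : F.Subcartesian) :
    ∀ {n : ℕ} {X Y : Sh 𝔟} (q : Pth (Sh 𝔟) n X Y),
      PthElts 𝔞 (q.map (sharpF F)) → PthElts 𝔟 q
  | _, _, _, .nil X => fun _ => .nil X
  | _, _, _, .cons v q => fun e =>
      .cons ((Equiv.ofBijective _ (hF (Sh.base v) _ _)).symm (PthElts.head e))
        (eltsLift hF q (PthElts.tail e))

theorem eltsMap_eltsLift (hF : F.Subcartesian) :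
    ∀ {n : ℕ} {X Y : Sh 𝔟} (q : Pth (Sh 𝔟) n X Y)
      (e : PthElts 𝔞 (q.map (sharpF F))), eltsMap F (eltsLift hF q e) = e := by
  intro n X Y q
  induction q with
  | nil X =>
    intro e
    have he : e = PthElts.nil ((sharpF F).obj X) := by cases e; rfl
    rw [he]; rfl
  | cons v q ih =>
    intro e
    have he : e = PthElts.cons e.head e.tail := PthElts.eta e
    rw [he]
    show PthElts.cons _ _ = _
    rw [ih]
    congr 1
    exact (Equiv.ofBijective _ (hF (Sh.base v) _ _)).apply_symm_apply _

theorem eltsLift_eltsMap (hF : F.Subcartesian) :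
    ∀ {n : ℕ} {X Y : Sh 𝔟} {q : Pth (Sh 𝔟) n X Y} (e : PthElts 𝔟 q),
      eltsLift hF q (eltsMap F e) = e := by
  intro n X Y q e
  induction e with
  | nil X => rfl
  | @cons n X Y Z v q x e ih =>
    show PthElts.cons _ _ = _
    rw [show (PthElts.head (eltsMap F (PthElts.cons x e))) = F.map (Sh.base v) x
      from rfl, show (PthElts.tail (eltsMap F (PthElts.cons x e))) = eltsMap F e
      from rfl, ih]
    congr 1
    exact (Equiv.ofBijective _ (hF (Sh.base v) _ _)).symm_apply_apply x

theorem pthMapInj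
    (hinj : Function.Injective
      (fun s : NerveTot (Sh 𝔟) 1 => NerveTot.map (sharpF F) s)) :
    ∀ {n : ℕ} {X₁ Y₁ X₂ Y₂ : Sh 𝔟} (q₁ : Pth (Sh 𝔟) n X₁ Y₁)
      (q₂ : Pth (Sh 𝔟) n X₂ Y₂),
      (⟨(sharpF F).obj X₁, (sharpF F).obj Y₁, q₁.map (sharpF F)⟩ :
        NerveTot (Sh 𝔞) n) =
        ⟨(sharpF F).obj X₂, (sharpF F).obj Y₂, q₂.map (sharpF F)⟩ →
      (⟨X₁, Y₁, q₁⟩ : NerveTot (Sh 𝔟) n) = ⟨X₂, Y₂, q₂⟩ := by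
  intro n
  induction n with
  | zero =>
    intro X₁ Y₁ X₂ Y₂ q₁ q₂ h
    cases q₁
    cases q₂
    obtain ⟨h1, -, -⟩ := nerveTot_inj h
    cases objInj hinj h1
    rfl
  | succ n ih =>
    intro X₁ Y₁ X₂ Y₂ q₁ q₂ h
    cases q₁ with
    | cons v₁ r₁ =>
      cases q₂ with
      | cons v₂ r₂ =>
        obtain ⟨h1, h2, h3⟩ := nerveTot_inj h
        cases objInj hinj h1
        cases objInj hinj h2
        obtain ⟨h4, h5, h6⟩ := pth_cons_inj (eq_of_heq h3)
        cases objInj hinj h4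
        cases mapInj hinj (eq_of_heq h5)
        have h7 := ih r₁ r₂ (congrArg
          (fun r => (⟨_, _, r⟩ : NerveTot (Sh 𝔞) (n + 0 + 1 - 1))) (eq_of_heq h6))
        obtain ⟨-, -, h8⟩ := nerveTot_inj h7
        cases eq_of_heq h8
        rfl

/-- The lifting trichotomy: every simplex with elements of `𝒩(𝔞)` either lifts along a
censoring `F`, or contains a zero element, or starts at an object whose graded unit
endomorphism module vanishes. -/
theorem lift_tri (hF' : F.Subcartesian)
    (hcens : ∀ (X Y : Sh 𝔞) (u : X ⟶ Y),
      ¬ (∃ s : NerveTot (Sh 𝔟) 1,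
          NerveTot.map (sharpF F) s = ⟨X, Y, Pth.cons u (Pth.nil Y)⟩) →
      Subsingleton (𝔞.Hom (Sh.base u) X.2 Y.2))
    (hinj : Function.Injective
      (fun s : NerveTot (Sh 𝔟) 1 => NerveTot.map (sharpF F) s)) :
    ∀ {n : ℕ} {X Y : Sh 𝔞} {p : Pth (Sh 𝔞) n X Y} (e : PthElts 𝔞 p),
      (∃ (X' Y' : Sh 𝔟) (q : Pth (Sh 𝔟) n X' Y') (e' : PthElts 𝔟 q),
        (⟨X, Y, p⟩ : NerveTot (Sh 𝔞) n) =
          ⟨(sharpF F).obj X', (sharpF F).obj Y', q.map (sharpF F)⟩ ∧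
          HEq e (eltsMap F e')) ∨
      hasZero e ∨ (∀ x : 𝔞.Hom (𝟙 X.1) X.2 X.2, x = 0) := by
  intro n X Y p e
  induction e with
  | nil X =>
    by_cases hid : ∃ s : NerveTot (Sh 𝔟) 1,
        NerveTot.map (sharpF F) s = ⟨X, X, Pth.cons (𝟙 X) (Pth.nil X)⟩
    · obtain ⟨⟨A, B, r⟩, hs⟩ := hid
      have h1 : (sharpF F).obj A = X :=
        congrArg (fun s : NerveTot (Sh 𝔞) 1 => s.1) hs
      subst h1
      left
      exact ⟨A, A, Pth.nil A, PthElts.nil A, rfl, HEq.rfl⟩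
    · right; right
      have h := hcens X X (𝟙 X) hid
      intro x
      exact h.allEq x 0
  | @cons n X Ymid Z u p' x e' ih =>
    by_cases hu : ∃ s : NerveTot (Sh 𝔟) 1,
        NerveTot.map (sharpF F) s = ⟨X, Ymid, Pth.cons u (Pth.nil Ymid)⟩
    · obtain ⟨⟨A, B, r⟩, hs⟩ := hu
      cases r with
      | cons v r' =>
        cases r'
        obtain ⟨h1, h2, h3⟩ := nerveTot_inj hs
        subst h1
        subst h2
        obtain ⟨-, h5, -⟩ := pth_cons_inj (eq_of_heq h3)
        have hv : (sharpF F).map v = u := eq_of_heq h5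
        subst hv
        rcases ih with ⟨A₂, Y₂, q₂, e₂, hsig, heqe⟩ | hz | hzero
        · -- everything lifts
          have hBA : B = A₂ := by
            obtain ⟨hb, -, -⟩ := nerveTot_inj hsig
            exact objInj hinj hb
          subst hBA
          obtain ⟨-, h6, h7⟩ := nerveTot_inj hsig
          subst h6
          have h8 : p' = q₂.map (sharpF F) := eq_of_heq h7
          subst h8
          have h9 : e' = eltsMap F e₂ := eq_of_heq heqe
          subst h9
          left
          refine ⟨A, Y₂, Pth.cons v q₂,
            PthElts.cons ((Equiv.ofBijective _ (hF' (Sh.base v) A.2 B.2)).symm x)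
              e₂, rfl, ?_⟩
          apply heq_of_eq
          show PthElts.cons x _ = PthElts.cons _ _
          congr 1
          exact ((Equiv.ofBijective _
            (hF' (Sh.base v) A.2 B.2)).apply_symm_apply x).symm
        · right; left
          exact Or.inr hz
        · -- unit module at the middle object vanishes, so x = 0
          right; left
          left
          exact Bimod.zero_of_unit' (𝔞.unit) hzero x
    · right; left
      left
      have h := hcens X Ymid u hu
      exact h.allEq x 0

variable (M : Bimod k 𝔞)

theorem bimod_add_congr {X Y : 𝒰} {f f' : X ⟶ Y} (h : f = f') {B : 𝔞.Obj X}
    {A : 𝔞.Obj Y} {m m' : M.M f B A} {n n' : M.M f' B A} (hm : HEq m n)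
    (hn : HEq m' n') : HEq (m + m') (n + n') := by
  subst h; rw [eq_of_heq hm, eq_of_heq hn]

theorem bimod_smul_congr {X Y : 𝒰} {f f' : X ⟶ Y} (h : f = f') {B : 𝔞.Obj X}
    {A : 𝔞.Obj Y} (r : k) {m : M.M f B A} {n : M.M f' B A} (hm : HEq m n) :
    HEq (r • m) (r • n) := by
  subst h; rw [eq_of_heq hm]

theorem apply_congr {n : ℕ} {W : 𝒰} {B : 𝔞.Obj W} {Y : Sh 𝔞} {v : W ⟶ Y.1}
    (χ : ∀ (Z : Sh 𝔞) (q : Pth (Sh 𝔞) n Y Z), PthElts 𝔞 q →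
      M.M (v ≫ Sh.base q.comp) B Z.2)
    {Z : Sh 𝔞} {q q' : Pth (Sh 𝔞) n Y Z} (h : q = q') {e : PthElts 𝔞 q}
    {e' : PthElts 𝔞 q'} (he : HEq e e') : HEq (χ Z q e) (χ Z q' e') := by
  subst h; rw [eq_of_heq he]

theorem eltsCons_congr {n : ℕ} {X Y Z : Sh 𝔞} {f f' : X ⟶ Y} (hf : f = f')
    {p : Pth (Sh 𝔞) n Y Z} {x : 𝔞.Hom (Sh.base f) X.2 Y.2}
    {x' : 𝔞.Hom (Sh.base f') X.2 Y.2} (hx : HEq x x') (e : PthElts 𝔞 p) :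
    HEq (PthElts.cons (f := f) x e) (PthElts.cons (f := f') x' e) := by
  subst hf; rw [eq_of_heq hx]

variable {M}

theorem lift_fix
    (hinj : Function.Injective
      (fun s : NerveTot (Sh 𝔟) 1 => NerveTot.map (sharpF F) s))
    {n : ℕ} {Y' : Sh 𝔟} {Z : Sh 𝔞} {q : Pth (Sh 𝔞) n ((sharpF F).obj Y') Z}
    (h : ∃ (X₂ Y₂ : Sh 𝔟) (q₂ : Pth (Sh 𝔟) n X₂ Y₂),
      (⟨(sharpF F).obj Y', Z, q⟩ : NerveTot (Sh 𝔞) n) =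
        ⟨(sharpF F).obj X₂, (sharpF F).obj Y₂, q₂.map (sharpF F)⟩) :
    ∃ (Z' : Sh 𝔟) (q' : Pth (Sh 𝔟) n Y' Z'),
      (⟨(sharpF F).obj Y', Z, q⟩ : NerveTot (Sh 𝔞) n) =
        ⟨(sharpF F).obj Y', (sharpF F).obj Z', q'.map (sharpF F)⟩ := by
  obtain ⟨X₂, Y₂, q₂, h⟩ := h
  have h1 : (sharpF F).obj Y' = (sharpF F).obj X₂ :=
    congrArg (fun s : NerveTot (Sh 𝔞) n => s.1) h
  cases objInj hinj h1
  exact ⟨Y₂, q₂, h⟩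

theorem lift_cons_down
    (hinj : Function.Injective
      (fun s : NerveTot (Sh 𝔟) 1 => NerveTot.map (sharpF F) s))
    {n : ℕ} {Y' B' : Sh 𝔟} {v' : Y' ⟶ B'} {Z : Sh 𝔞}
    {q : Pth (Sh 𝔞) n ((sharpF F).obj B') Z}
    (h : ∃ (Z' : Sh 𝔟) (q₂ : Pth (Sh 𝔟) (n + 1) Y' Z'),
      (⟨(sharpF F).obj Y', Z, Pth.cons ((sharpF F).map v') q⟩ :
        NerveTot (Sh 𝔞) (n + 1)) =
        ⟨(sharpF F).obj Y', (sharpF F).obj Z', q₂.map (sharpF F)⟩) :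
    ∃ (Z' : Sh 𝔟) (q' : Pth (Sh 𝔟) n B' Z'),
      (⟨(sharpF F).obj B', Z, q⟩ : NerveTot (Sh 𝔞) n) =
        ⟨(sharpF F).obj B', (sharpF F).obj Z', q'.map (sharpF F)⟩ := by
  obtain ⟨Z', q₂, h⟩ := h
  cases q₂ with
  | cons w r =>
    obtain ⟨-, h2, h3⟩ := nerveTot_inj h
    subst h2
    obtain ⟨h4, -, h6⟩ := pth_cons_inj (eq_of_heq h3)
    cases objInj hinj h4
    exact ⟨Z', r, congrArg (fun t => (⟨(sharpF F).obj B', (sharpF F).obj Z', t⟩ :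
      NerveTot (Sh 𝔞) n)) (eq_of_heq h6)⟩

/-- Transfer of multilinearity along a censoring subcartesian graded functor. -/
theorem isML_transfer (hF' : F.Subcartesian)
    (hinj : Function.Injective
      (fun s : NerveTot (Sh 𝔟) 1 => NerveTot.map (sharpF F) s))
    (M : Bimod k 𝔞) :
    ∀ {n : ℕ} {W : 𝒱} {B : 𝔟.Obj W} {Y' : Sh 𝔟} {v : W ⟶ Y'.1}
      {vh : φ.obj W ⟶ ((sharpF F).obj Y').1} (_ : vh = φ.map v)
      (χ : ∀ (Z : Sh 𝔞) (q : Pth (Sh 𝔞) n ((sharpF F).obj Y') Z), PthElts 𝔞 q →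
        M.M (vh ≫ Sh.base q.comp) (F.obj B) Z.2)
      (χ' : ∀ (Z' : Sh 𝔟) (q' : Pth (Sh 𝔟) n Y' Z'), PthElts 𝔟 q' →
        (Bimod.pullback F M).M (v ≫ Sh.base q'.comp) B Z'.2),
      IsML (Bimod.pullback F M) χ' →
      (∀ (Z' : Sh 𝔟) (q' : Pth (Sh 𝔟) n Y' Z') (e' : PthElts 𝔟 q'),
        HEq (χ ((sharpF F).obj Z') (q'.map (sharpF F)) (eltsMap F e'))
          (χ' Z' q' e')) →
      (∀ (Z : Sh 𝔞) (q : Pth (Sh 𝔞) n ((sharpF F).obj Y') Z) (e : PthElts 𝔞 q),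
        ¬ (∃ (Z' : Sh 𝔟) (q' : Pth (Sh 𝔟) n Y' Z'),
          (⟨(sharpF F).obj Y', Z, q⟩ : NerveTot (Sh 𝔞) n) =
            ⟨(sharpF F).obj Y', (sharpF F).obj Z', q'.map (sharpF F)⟩) →
        χ Z q e = 0) →
      IsML M χ := by
  intro n
  induction n with
  | zero => intro _ _ _ _ _ _ _ _ _ _ _; trivial
  | succ n ih =>
    intro W B Y' v vh hv χ χ' hχ' hχ hzero
    refine ⟨?_, ?_, ?_⟩
    · -- additivity in the first slot
      intro Ymid Z a q e x x₂
      by_cases hlift : ∃ (Z' : Sh 𝔟) (q' : Pth (Sh 𝔟) (n + 1) Y' Z'),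
          (⟨(sharpF F).obj Y', Z, Pth.cons a q⟩ : NerveTot (Sh 𝔞) (n + 1)) =
            ⟨(sharpF F).obj Y', (sharpF F).obj Z', q'.map (sharpF F)⟩
      · obtain ⟨Z', q', hsig⟩ := hlift
        cases q' with
        | cons v' r' =>
          obtain ⟨-, h2, h3⟩ := nerveTot_inj hsig
          subst h2
          obtain ⟨h4, h5, h6⟩ := pth_cons_inj (eq_of_heq h3)
          subst h4
          have ha : a = (sharpF F).map v' := eq_of_heq h5
          subst ha
          have hq : q = r'.map (sharpF F) := eq_of_heq h6
          subst hq
          rw [show e = eltsMap F (eltsLift hF' r' e) from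
            (eltsMap_eltsLift hF' r' e).symm,
            show x = F.map (Sh.base v')
              ((Equiv.ofBijective _ (hF' (Sh.base v') _ _)).symm x) from
              ((Equiv.ofBijective _ (hF' (Sh.base v') _ _)).apply_symm_apply
                x).symm,
            show x₂ = F.map (Sh.base v')
              ((Equiv.ofBijective _ (hF' (Sh.base v') _ _)).symm x₂) from
              ((Equiv.ofBijective _ (hF' (Sh.base v') _ _)).apply_symm_apply
                x₂).symm]
          erw [← F.map_add]
          set y := (Equiv.ofBijective _ (hF' (Sh.base v') _ _)).symm x with hy
          set y₂ := (Equiv.ofBijective _ (hF' (Sh.base v') _ _)).symm x₂ with hy₂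
          set eL := eltsLift hF' r' e with heL
          have hmor : vh ≫ Sh.base (Pth.cons ((sharpF F).map v')
              (r'.map (sharpF F))).comp =
              φ.map (v ≫ Sh.base (Pth.cons v' r').comp) := by
            rw [hv]
            simp only [Pth.comp_cons, Sh.base_comp, Pth.comp_map,
              Functor.map_comp]
            rfl
          have e1 := hχ Z' (Pth.cons v' r') (PthElts.cons (y + y₂) eL)
          have e2 := hχ Z' (Pth.cons v' r') (PthElts.cons y eL)
          have e3 := hχ Z' (Pth.cons v' r') (PthElts.cons y₂ eL)
          have e4 := hχ'.1 _ Z' v' r' eL y y₂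
          exact eq_of_heq ((e1.trans (heq_of_eq e4)).trans
            (bimod_add_congr M hmor.symm e2.symm e3.symm))
      · rw [hzero _ _ _ hlift, hzero _ _ _ hlift, hzero _ _ _ hlift, add_zero]
    · -- homogeneity in the first slot
      intro Ymid Z a q e r x
      by_cases hlift : ∃ (Z' : Sh 𝔟) (q' : Pth (Sh 𝔟) (n + 1) Y' Z'),
          (⟨(sharpF F).obj Y', Z, Pth.cons a q⟩ : NerveTot (Sh 𝔞) (n + 1)) =
            ⟨(sharpF F).obj Y', (sharpF F).obj Z', q'.map (sharpF F)⟩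
      · obtain ⟨Z', q', hsig⟩ := hlift
        cases q' with
        | cons v' r' =>
          obtain ⟨-, h2, h3⟩ := nerveTot_inj hsig
          subst h2
          obtain ⟨h4, h5, h6⟩ := pth_cons_inj (eq_of_heq h3)
          subst h4
          have ha : a = (sharpF F).map v' := eq_of_heq h5
          subst ha
          have hq : q = r'.map (sharpF F) := eq_of_heq h6
          subst hq
          rw [show e = eltsMap F (eltsLift hF' r' e) from
            (eltsMap_eltsLift hF' r' e).symm,
            show x = F.map (Sh.base v')
              ((Equiv.ofBijective _ (hF' (Sh.base v') _ _)).symm x) from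
              ((Equiv.ofBijective _ (hF' (Sh.base v') _ _)).apply_symm_apply
                x).symm]
          erw [← F.map_smul]
          set y := (Equiv.ofBijective _ (hF' (Sh.base v') _ _)).symm x with hy
          set eL := eltsLift hF' r' e with heL
          have hmor : vh ≫ Sh.base (Pth.cons ((sharpF F).map v')
              (r'.map (sharpF F))).comp =
              φ.map (v ≫ Sh.base (Pth.cons v' r').comp) := by
            rw [hv]
            simp only [Pth.comp_cons, Sh.base_comp, Pth.comp_map,
              Functor.map_comp]
            rfl
          have e1 := hχ Z' (Pth.cons v' r') (PthElts.cons (r • y) eL)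
          have e2 := hχ Z' (Pth.cons v' r') (PthElts.cons y eL)
          have e4 := hχ'.2.1 _ Z' v' r' eL r y
          exact eq_of_heq ((e1.trans (heq_of_eq e4)).trans
            (bimod_smul_congr M hmor.symm r e2.symm))
      · rw [hzero _ _ _ hlift, hzero _ _ _ hlift, smul_zero]
    · -- partial evaluations
      intro Ymid a x
      by_cases ha : ∃ s : NerveTot (Sh 𝔟) 1,
          NerveTot.map (sharpF F) s =
            ⟨(sharpF F).obj Y', Ymid, Pth.cons a (Pth.nil Ymid)⟩
      · obtain ⟨⟨A, B', r⟩, hs⟩ := ha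
        cases r with
        | cons v' r' =>
          cases r'
          obtain ⟨h1, h2, h3⟩ := nerveTot_inj hs
          cases objInj hinj h1
          subst h2
          obtain ⟨-, h5, -⟩ := pth_cons_inj (eq_of_heq h3)
          have ha2 : a = (sharpF F).map v' := (eq_of_heq h5).symm
          subst ha2
          rw [show x = F.map (Sh.base v')
            ((Equiv.ofBijective _ (hF' (Sh.base v') _ _)).symm x) from
            ((Equiv.ofBijective _ (hF' (Sh.base v') _ _)).apply_symm_apply
              x).symm]
          set y := (Equiv.ofBijective _ (hF' (Sh.base v') _ _)).symm x with hy
          refine ih (v := v ≫ Sh.base v')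
            (show vh ≫ Sh.base ((sharpF F).map v') = φ.map (v ≫ Sh.base v') by
              rw [hv]; exact (φ.map_comp _ _).symm) _
            (fun Z q e => (Bimod.pullback F M).cst (by simp)
              (χ' Z (Pth.cons v' q) (PthElts.cons y e)))
            (hχ'.2.2 _ v' y) ?_ ?_
          · intro Z' q' e'
            exact ((M.cst_heq _ _).trans
              (hχ Z' (Pth.cons v' q') (PthElts.cons y e'))).trans
              ((Bimod.pullback F M).cst_heq _ _).symm
          · intro Z q e hnl
            rw [hzero Z (Pth.cons ((sharpF F).map v') q)
              (PthElts.cons (F.map (Sh.base v') y) e)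
              (fun hcontra => hnl (lift_cons_down hinj hcontra))]
            exact M.cst_zero _
      · -- head arrow not liftable: everything vanishes
        refine isML_of_zero M _ (fun Z q e => ?_)
        have h0 : χ Z (Pth.cons a q) (PthElts.cons x e) = 0 := by
          refine hzero Z (Pth.cons a q) (PthElts.cons x e) (fun hcontra => ?_)
          obtain ⟨Z', q₂, h⟩ := hcontra
          cases q₂ with
          | cons w r =>
            obtain ⟨-, h2, h3⟩ := nerveTot_inj h
            subst h2
            obtain ⟨h4, h5, -⟩ := pth_cons_inj (eq_of_heq h3)
            refine ha ⟨⟨Y', _, Pth.cons w (Pth.nil _)⟩, ?_⟩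
            exact Sigma.mk.inj_iff.mpr ⟨rfl, heq_of_eq (Sigma.mk.inj_iff.mpr
              ⟨h4.symm, consNil_congr h4.symm h5.symm⟩)⟩
        rw [h0]; exact M.cst_zero _

section LiftCochain

variable (M : Bimod k 𝔞)

/-- Transport of bimodule elements along an equality of simplices. -/
def mCast {n : ℕ} {X Y X₂ Y₂ : Sh 𝔞} {p : Pth (Sh 𝔞) n X Y}
    {p₂ : Pth (Sh 𝔞) n X₂ Y₂}
    (h : (⟨X, Y, p⟩ : NerveTot (Sh 𝔞) n) = ⟨X₂, Y₂, p₂⟩)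
    (m : M.M (Sh.base p.comp) X.2 Y.2) : M.M (Sh.base p₂.comp) X₂.2 Y₂.2 :=
  _root_.cast (congrArg (fun s : NerveTot (Sh 𝔞) n =>
    ((M.M (Sh.base s.2.2.comp) s.1.2 s.2.1.2 : ModuleCat k) : Type u)) h) m

theorem mCast_heq {n : ℕ} {X Y X₂ Y₂ : Sh 𝔞} {p : Pth (Sh 𝔞) n X Y}
    {p₂ : Pth (Sh 𝔞) n X₂ Y₂}
    (h : (⟨X, Y, p⟩ : NerveTot (Sh 𝔞) n) = ⟨X₂, Y₂, p₂⟩)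
    (m : M.M (Sh.base p.comp) X.2 Y.2) : HEq (mCast M h m) m :=
  cast_heq _ _

/-- Transport of element families along an equality of simplices. -/
def eCast {𝔠 : GradedCat k 𝒰} {n : ℕ} {X Y X₂ Y₂ : Sh 𝔠} {p : Pth (Sh 𝔠) n X Y}
    {p₂ : Pth (Sh 𝔠) n X₂ Y₂}
    (h : (⟨X, Y, p⟩ : NerveTot (Sh 𝔠) n) = ⟨X₂, Y₂, p₂⟩)
    (e : PthElts 𝔠 p) : PthElts 𝔠 p₂ :=
  _root_.cast (congrArg (fun s : NerveTot (Sh 𝔠) n => PthElts 𝔠 s.2.2) h) e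

theorem eCast_heq {𝔠 : GradedCat k 𝒰} {n : ℕ} {X Y X₂ Y₂ : Sh 𝔠}
    {p : Pth (Sh 𝔠) n X Y} {p₂ : Pth (Sh 𝔠) n X₂ Y₂}
    (h : (⟨X, Y, p⟩ : NerveTot (Sh 𝔠) n) = ⟨X₂, Y₂, p₂⟩) (e : PthElts 𝔠 p) :
    HEq (eCast h e) e :=
  cast_heq _ _

open scoped Classical in
/-- The candidate preimage cochain of a cochain on the `(𝒱, 𝔟)`-side. -/
noncomputable def liftCochain (hF' : F.Subcartesian) {n : ℕ}
    (c' : RawCochain (Bimod.pullback F M) n) : RawCochain M n := fun X Y p e =>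
  if h : ∃ (X' Y' : Sh 𝔟) (q : Pth (Sh 𝔟) n X' Y'),
      (⟨X, Y, p⟩ : NerveTot (Sh 𝔞) n) =
        ⟨(sharpF F).obj X', (sharpF F).obj Y', q.map (sharpF F)⟩ then
    mCast M h.choose_spec.choose_spec.choose_spec.symm
      (M.cst (by rw [Pth.comp_map]; rfl)
        (c' h.choose h.choose_spec.choose h.choose_spec.choose_spec.choose
          (eltsLift hF' _ (eCast h.choose_spec.choose_spec.choose_spec e))))
  else 0

theorem liftCochain_spec (hF' : F.Subcartesian)
    (hinj : Function.Injective
      (fun s : NerveTot (Sh 𝔟) 1 => NerveTot.map (sharpF F) s))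
    {n : ℕ} (c' : RawCochain (Bimod.pullback F M) n) (X' Y' : Sh 𝔟)
    (q : Pth (Sh 𝔟) n X' Y') (e' : PthElts 𝔟 q) :
    HEq (liftCochain M hF' c' ((sharpF F).obj X') ((sharpF F).obj Y')
      (q.map (sharpF F)) (eltsMap F e')) (c' X' Y' q e') := by
  have hex : ∃ (X₂ Y₂ : Sh 𝔟) (q₂ : Pth (Sh 𝔟) n X₂ Y₂),
      (⟨(sharpF F).obj X', (sharpF F).obj Y', q.map (sharpF F)⟩ :
        NerveTot (Sh 𝔞) n) =
        ⟨(sharpF F).obj X₂, (sharpF F).obj Y₂, q₂.map (sharpF F)⟩ :=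
    ⟨X', Y', q, rfl⟩
  unfold liftCochain; rw [dif_pos hex]
  have key : ∀ (A B : Sh 𝔟) (r : Pth (Sh 𝔟) n A B)
      (hsig : (⟨(sharpF F).obj X', (sharpF F).obj Y', q.map (sharpF F)⟩ :
        NerveTot (Sh 𝔞) n) =
        ⟨(sharpF F).obj A, (sharpF F).obj B, r.map (sharpF F)⟩),
      HEq (mCast M hsig.symm (M.cst (by rw [Pth.comp_map]; rfl)
        (c' A B r (eltsLift hF' _ (eCast hsig (eltsMap F e'))))))
        (c' X' Y' q e') := by
    intro A B r hsig
    obtain ⟨h1, h2, h3⟩ := nerveTot_inj (pthMapInj hinj q r hsig)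
    subst h1
    subst h2
    cases eq_of_heq h3
    have he : eCast hsig (eltsMap F e') = eltsMap F e' :=
      eq_of_heq (eCast_heq hsig (eltsMap F e'))
    rw [he, eltsLift_eltsMap hF']
    exact (mCast_heq M _ _).trans (M.cst_heq _ _)
  exact key _ _ _ hex.choose_spec.choose_spec.choose_spec

theorem liftCochain_zero (hF' : F.Subcartesian) {n : ℕ}
    (c' : RawCochain (Bimod.pullback F M) n) {X Y : Sh 𝔞} {p : Pth (Sh 𝔞) n X Y}
    (e : PthElts 𝔞 p)
    (h : ¬ ∃ (X' Y' : Sh 𝔟) (q : Pth (Sh 𝔟) n X' Y'),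
      (⟨X, Y, p⟩ : NerveTot (Sh 𝔞) n) =
        ⟨(sharpF F).obj X', (sharpF F).obj Y', q.map (sharpF F)⟩) :
    liftCochain M hF' c' X Y p e = 0 := by
  unfold liftCochain; rw [dif_neg h]

theorem liftCochain_isCochain (hF' : F.Subcartesian)
    (hinj : Function.Injective
      (fun s : NerveTot (Sh 𝔟) 1 => NerveTot.map (sharpF F) s))
    (hcens : ∀ (X Y : Sh 𝔞) (u : X ⟶ Y),
      ¬ (∃ s : NerveTot (Sh 𝔟) 1,
          NerveTot.map (sharpF F) s = ⟨X, Y, Pth.cons u (Pth.nil Y)⟩) →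
      Subsingleton (𝔞.Hom (Sh.base u) X.2 Y.2))
    {n : ℕ} (c' : RawCochain (Bimod.pullback F M) n)
    (hc' : IsCochain (Bimod.pullback F M) c') :
    IsCochain M (liftCochain M hF' c') := by
  intro X
  by_cases hid : ∃ s : NerveTot (Sh 𝔟) 1,
      NerveTot.map (sharpF F) s = ⟨X, X, Pth.cons (𝟙 X) (Pth.nil X)⟩
  · obtain ⟨⟨A, B, r⟩, hs⟩ := hid
    have h1 : (sharpF F).obj A = X :=
      congrArg (fun s : NerveTot (Sh 𝔞) 1 => s.1) hs
    subst h1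
    refine isML_transfer hF' hinj M (v := 𝟙 A.1)
      ((φ.map_id A.1).symm) _ (toRel (Bimod.pullback F M) c' A) (hc' A) ?_ ?_
    · intro Z' q' e'
      exact ((M.cst_heq _ _).trans
        (liftCochain_spec M hF' hinj c' A Z' q' e')).trans
        ((Bimod.pullback F M).cst_heq _ _).symm
    · intro Z q e hnl
      show M.cst _ (liftCochain M hF' c' _ Z q e) = 0
      rw [liftCochain_zero M hF' c' e (fun hgen => hnl (lift_fix hinj hgen)),
        M.cst_zero]
  · have hzero : ∀ x : 𝔞.Hom (𝟙 X.1) X.2 X.2, x = 0 :=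
      fun x => (hcens X X (𝟙 X) hid).allEq x 0
    exact isML_of_zero M _ (fun Z q e => Bimod.zero_of_unit M hzero _)

theorem fstar_liftCochain (hF' : F.Subcartesian)
    (hinj : Function.Injective
      (fun s : NerveTot (Sh 𝔟) 1 => NerveTot.map (sharpF F) s))
    {n : ℕ} (c' : RawCochain (Bimod.pullback F M) n) :
    Fstar F M (liftCochain M hF' c') = c' := by
  funext X' Y' q e'
  exact eq_of_heq ((M.cst_heq _ _).trans
    (liftCochain_spec M hF' hinj c' X' Y' q e'))

theorem fstar_inj (hF' : F.Subcartesian)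
    (hinj : Function.Injective
      (fun s : NerveTot (Sh 𝔟) 1 => NerveTot.map (sharpF F) s))
    (hcens : ∀ (X Y : Sh 𝔞) (u : X ⟶ Y),
      ¬ (∃ s : NerveTot (Sh 𝔟) 1,
          NerveTot.map (sharpF F) s = ⟨X, Y, Pth.cons u (Pth.nil Y)⟩) →
      Subsingleton (𝔞.Hom (Sh.base u) X.2 Y.2))
    {n : ℕ} {c c' : RawCochain M n} (hc : IsCochain M c) (hc' : IsCochain M c')
    (h : Fstar F M c = Fstar F M c') : c = c' := by
  funext X Y p e
  rcases lift_tri hF' hcens hinj e with ⟨X', Y', q, e', hsig, heqe⟩ | hz | hzero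
  · obtain ⟨h1, h2, h3⟩ := nerveTot_inj hsig
    subst h1
    subst h2
    cases eq_of_heq h3
    cases eq_of_heq heqe
    have h4 := congrFun (congrFun (congrFun (congrFun h X') Y') q) e'
    simp only [Fstar] at h4
    exact M.cst_inj _ h4
  · have z1 := isML_vanish M _ (hc X) p e hz
    have z2 := isML_vanish M _ (hc' X) p e hz
    simp only [toRel] at z1 z2
    rw [M.cst_eq_zero _ z1, M.cst_eq_zero _ z2]
  · rw [Bimod.zero_of_unit M hzero (c X Y p e),
      Bimod.zero_of_unit M hzero (c' X Y p e)]

end LiftCochain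

section Differential

variable (M : Bimod k 𝔞)

theorem pullback_actL_heq {X Y Z : 𝒱} {f : Y ⟶ Z} {g : X ⟶ Y} {B : 𝔟.Obj X}
    {A : 𝔟.Obj Y} {A' : 𝔟.Obj Z} (x : 𝔟.Hom f A A')
    (m : (Bimod.pullback F M).M g B A) :
    HEq ((Bimod.pullback F M).actL x m) (M.actL (F.map f x) m) :=
  M.cst_heq (φ.map_comp g f).symm _

theorem pullback_actR_heq {X Y Z : 𝒱} {f : Y ⟶ Z} {g : X ⟶ Y} {B' : 𝔟.Obj X}
    {B : 𝔟.Obj Y} {A : 𝔟.Obj Z} (m : (Bimod.pullback F M).M f B A)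
    (y : 𝔟.Hom g B' B) :
    HEq ((Bimod.pullback F M).actR m y) (M.actR m (F.map g y)) :=
  M.cst_heq (φ.map_comp g f).symm _

theorem hochD_map :
    ∀ {m : ℕ} {W : 𝒱} (B : 𝔟.Obj W) {Y Z : Sh 𝔟} (v : W ⟶ Y.1)
      (vh : φ.obj W ⟶ ((sharpF F).obj Y).1) (_ : vh = φ.map v)
      (χ : ∀ (Z' : Sh 𝔟) (q : Pth (Sh 𝔟) m Y Z'), PthElts 𝔟 q →
        (Bimod.pullback F M).M (v ≫ Sh.base q.comp) B Z'.2)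
      (χh : ∀ (Z' : Sh 𝔞) (q : Pth (Sh 𝔞) m ((sharpF F).obj Y) Z'),
        PthElts 𝔞 q → M.M (vh ≫ Sh.base q.comp) (F.obj B) Z'.2)
      (G : ∀ (Y' Z' : Sh 𝔟) (c : Y ⟶ Y') (_ : 𝔟.Hom (Sh.base c) Y.2 Y'.2)
        (q : Pth (Sh 𝔟) m Y' Z'), PthElts 𝔟 q →
        (Bimod.pullback F M).M (v ≫ (Sh.base c ≫ Sh.base q.comp)) B Z'.2)
      (Gh : ∀ (Y' Z' : Sh 𝔞) (c : (sharpF F).obj Y ⟶ Y')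
        (_ : 𝔞.Hom (Sh.base c) ((sharpF F).obj Y).2 Y'.2)
        (q : Pth (Sh 𝔞) m Y' Z'), PthElts 𝔞 q →
        M.M (vh ≫ (Sh.base c ≫ Sh.base q.comp)) (F.obj B) Z'.2)
      (_ : ∀ (Z' : Sh 𝔟) (q : Pth (Sh 𝔟) m Y Z') (eq : PthElts 𝔟 q),
        HEq (χ Z' q eq)
          (χh ((sharpF F).obj Z') (q.map (sharpF F)) (eltsMap F eq)))
      (_ : ∀ (Y' Z' : Sh 𝔟) (c : Y ⟶ Y') (z : 𝔟.Hom (Sh.base c) Y.2 Y'.2)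
        (q : Pth (Sh 𝔟) m Y' Z') (eq : PthElts 𝔟 q),
        HEq (G Y' Z' c z q eq)
          (Gh ((sharpF F).obj Y') ((sharpF F).obj Z') ((sharpF F).map c)
            (F.map (Sh.base c) z) (q.map (sharpF F)) (eltsMap F eq)))
      (p : Pth (Sh 𝔟) (m + 1) Y Z) (e : PthElts 𝔟 p),
      HEq (hochD (Bimod.pullback F M) B v χ G p e)
        (hochD M (F.obj B) vh χh Gh (p.map (sharpF F)) (eltsMap F e)) := by
  intro m
  induction m with
  | zero =>
    intro W B Y Z v vh hv χ χh G Gh hχ hG p e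
    cases e with
    | @cons m X' Y' Z' a p' x e' =>
      cases e'
      refine Bimod.sub_congr M (by simp [hv]; rfl) (hG _ _ a x (Pth.nil _)
        (PthElts.nil _)) ?_
      have step : HEq
          (M.actL (F.map (Sh.base a) x) (χ Y (Pth.nil Y) (PthElts.nil Y)))
          (M.actL (F.map (Sh.base a) x)
            (χh ((sharpF F).obj Y) (Pth.nil ((sharpF F).obj Y))
              (PthElts.nil ((sharpF F).obj Y)))) :=
        M.actL_congr rfl (by simp [hv]; exact (Category.comp_id _).symm) HEq.rfl
          (hχ Y (Pth.nil Y) (PthElts.nil Y))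
      exact (((Bimod.pullback F M).cst_heq _ _).trans
        ((pullback_actL_heq M x (χ Y (Pth.nil Y) (PthElts.nil Y))).trans
          step)).trans (M.cst_heq _ _).symm
  | succ m ih =>
    intro W B Y Z v vh hv χ χh G Gh hχ hG p e
    cases e with
    | @cons m' X' Y' Z' a q x e' =>
      refine Bimod.sub_congr M (by simp [hv, Pth.comp_map]; rfl)
        (hG _ _ a x q e') ?_
      refine (((Bimod.pullback F M).cst_heq _ _).trans ?_).trans
        (M.cst_heq _ _).symm
      refine ih B (v ≫ Sh.base a) (vh ≫ Sh.base ((sharpF F).map a))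
        (by rw [hv]; exact (φ.map_comp _ _).symm) _ _ _ _ ?_ ?_ q e'
      · intro Z₂ r er
        exact (((Bimod.pullback F M).cst_heq _ _).trans
          (hχ Z₂ (Pth.cons a r) (PthElts.cons x er))).trans
          (M.cst_heq _ _).symm
      · intro Y₂ Z₂ c z r er
        refine (((Bimod.pullback F M).cst_heq _ _).trans
          ((hχ Z₂ (Pth.cons (a ≫ c) r) (PthElts.cons (𝔟.comp z x) er)).trans
            ?_)).trans (M.cst_heq _ _).symm
        refine apply_congr M χh
          (congrArg (fun f => Pth.cons f (r.map (sharpF F)))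
            ((sharpF F).map_comp a c)) ?_
        exact eltsCons_congr ((sharpF F).map_comp a c) (F.map_comp z x)
          (eltsMap F er)

theorem fstar_dRaw {n : ℕ} (c : RawCochain M n) :
    Fstar F M (dRaw M c) = dRaw (Bimod.pullback F M) (Fstar F M c) := by
  funext X Z p e
  refine eq_of_heq ?_
  refine ((M.cst_heq _ _).trans ((M.cst_heq _ _).trans ?_)).trans
    ((Bimod.pullback F M).cst_heq _ _).symm
  refine (hochD_map M X.2 (𝟙 X.1) (𝟙 (φ.obj X.1)) ((φ.map_id _).symm)
    _ _ _ _ ?_ ?_ p e).symm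
  · intro Z' q eq
    exact (((Bimod.pullback F M).cst_heq _ _).trans
      ((M.cst_heq _ _).trans (M.cst_heq _ _).symm))
  · intro Y' Z' a z q eq
    have step : HEq (M.actR (Fstar F M c Y' Z' q eq) (F.map (Sh.base a) z))
        (M.actR (c ((sharpF F).obj Y') ((sharpF F).obj Z')
          (Pth.map (sharpF F) q) (eltsMap F eq)) (F.map (Sh.base a) z)) :=
      M.actR_congr (by rw [Pth.comp_map]; rfl) rfl (M.cst_heq _ _) HEq.rfl
    exact (((Bimod.pullback F M).cst_heq _ _).trans
      ((pullback_actR_heq M (Fstar F M c Y' Z' q eq) z).trans step)).trans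
      (M.cst_heq _ _).symm

end Differential

end Funct

section Part1

variable {𝔞 : GradedCat k 𝒰}

theorem restrict_obj_inj (𝒮 : Subcat 𝒰)
    {X₁ X₂ : Sh (𝔞.restrict 𝒮.incl)}
    (h : (sharpF (restrictProj 𝒮.incl 𝔞)).obj X₁ =
      (sharpF (restrictProj 𝒮.incl 𝔞)).obj X₂) : X₁ = X₂ := by
  obtain ⟨⟨V₁, hV₁⟩, A₁⟩ := X₁
  obtain ⟨⟨V₂, hV₂⟩, A₂⟩ := X₂
  obtain ⟨h1, h2⟩ := Sigma.mk.inj_iff.mp h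
  subst h1
  have h3 : A₁ = A₂ := eq_of_heq h2
  exact congrArg (fun a => (⟨⟨V₁, hV₁⟩, a⟩ : Sh (𝔞.restrict 𝒮.incl))) h3

theorem restrict_nerve_inj (𝒮 : Subcat 𝒰) :
    Function.Injective
      (fun s : NerveTot (Sh (𝔞.restrict 𝒮.incl)) 1 =>
        NerveTot.map (sharpF (restrictProj 𝒮.incl 𝔞)) s) := by
  intro s₁ s₂ h
  obtain ⟨X₁, Y₁, p₁⟩ := s₁
  obtain ⟨X₂, Y₂, p₂⟩ := s₂
  cases p₁ with
  | cons v₁ r₁ =>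
    cases r₁
    cases p₂ with
    | cons v₂ r₂ =>
      cases r₂
      obtain ⟨h1, h2, h3⟩ := nerveTot_inj h
      cases restrict_obj_inj 𝒮 h1
      cases restrict_obj_inj 𝒮 h2
      obtain ⟨-, h5, -⟩ := pth_cons_inj (eq_of_heq h3)
      have hv : v₁ = v₂ := Subtype.ext (eq_of_heq h5)
      rw [hv]

/-- Objects of `(𝒮-restriction)^♯`. -/
def shObj (𝒮 : Subcat 𝒰) (𝔞 : GradedCat k 𝒰) (U : 𝒰) (hU : 𝒮.objs U)
    (A : 𝔞.Obj U) : Sh (𝔞.restrict 𝒮.incl) := ⟨⟨U, hU⟩, A⟩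

/-- Morphisms of `(𝒮-restriction)^♯`. -/
def shHom (𝒮 : Subcat 𝒰) (𝔞 : GradedCat k 𝒰) {U V : 𝒰} {hU : 𝒮.objs U}
    {hV : 𝒮.objs V} {A : 𝔞.Obj U} {B : 𝔞.Obj V} (u : U ⟶ V)
    (hu : 𝒮.homs u) : shObj 𝒮 𝔞 U hU A ⟶ shObj 𝒮 𝔞 V hV B := ⟨u, hu⟩

theorem restrict_cens (𝒮 : Subcat 𝒰)
    (hS : ∀ {X Y : 𝒰} (u : X ⟶ Y), ¬ 𝒮.homs u →
      ∀ (A : 𝔞.Obj X) (A' : 𝔞.Obj Y), Subsingleton (𝔞.Hom u A A'))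
    (X Y : Sh 𝔞) (u : X ⟶ Y)
    (hno : ¬ (∃ s : NerveTot (Sh (𝔞.restrict 𝒮.incl)) 1,
      NerveTot.map (sharpF (restrictProj 𝒮.incl 𝔞)) s =
        ⟨X, Y, Pth.cons u (Pth.nil Y)⟩)) :
    Subsingleton (𝔞.Hom (Sh.base u) X.2 Y.2) := by
  refine hS (Sh.base u) (fun hmem => ?_) X.2 Y.2
  have key : NerveTot.map (sharpF (restrictProj 𝒮.incl 𝔞))
      ⟨shObj 𝒮 𝔞 X.1 (𝒮.dom_mem _ hmem) X.2,
        shObj 𝒮 𝔞 Y.1 (𝒮.cod_mem _ hmem) Y.2,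
        Pth.cons (shHom 𝒮 𝔞 (Sh.base u) hmem)
          (Pth.nil (shObj 𝒮 𝔞 Y.1 (𝒮.cod_mem _ hmem) Y.2))⟩ =
      ⟨X, Y, Pth.cons u (Pth.nil Y)⟩ := rfl
  exact hno ⟨_, key⟩

end Part1

end MapGr

namespace MapGr

variable {k : Type u} [CommRing k] {𝒰 : Type u} [Category.{u} 𝒰]

/-- Let `𝔞` be a `𝒰`-graded category and `M` an `𝔞`-bimodule.
(1) If `𝒱 ⊆ 𝒰` is a censoring subcategory (`𝔞_u(A, A') = 0` for every morphism `u` of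
`𝒰` not lying in `𝒱`), then `φ* : C_𝒰(𝔞, M) → C_𝒱(𝔞^φ, M^φ)` is an isomorphism of
complexes.
(2) If `(φ, F) : (𝒱, 𝔟) → (𝒰, 𝔞)` is a subcartesian graded functor with `𝒩₁(F)`
injective which is censoring (`𝔞_u(A, A') = 0` for every morphism `u : A → A'` of `𝒰^♯`
not in the image of `𝒩₁(F)`), then `F* : C_𝒰(𝔞, M) → C_𝒱(𝔟, F*M)` is an isomorphism of
complexes. -/
theorem statement17 (𝔞 : GradedCat k 𝒰) (M : Bimod k 𝔞) :
    -- (1): censoring subcategories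
    (∀ 𝒮 : Subcat 𝒰,
      (∀ {X Y : 𝒰} (u : X ⟶ Y), ¬ 𝒮.homs u →
        ∀ (A : 𝔞.Obj X) (A' : 𝔞.Obj Y), Subsingleton (𝔞.Hom u A A')) →
      ∀ n : ℕ,
        (∀ c c' : RawCochain M n, IsCochain M c → IsCochain M c' →
          Fstar (restrictProj 𝒮.incl 𝔞) M c = Fstar (restrictProj 𝒮.incl 𝔞) M c' →
          c = c') ∧
        (∀ c' : RawCochain (Bimod.pullback (restrictProj 𝒮.incl 𝔞) M) n,
          IsCochain (Bimod.pullback (restrictProj 𝒮.incl 𝔞) M) c' →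
          ∃ c : RawCochain M n, IsCochain M c ∧
            Fstar (restrictProj 𝒮.incl 𝔞) M c = c') ∧
        (∀ c : RawCochain M n,
          Fstar (restrictProj 𝒮.incl 𝔞) M (dRaw M c) =
            dRaw (Bimod.pullback (restrictProj 𝒮.incl 𝔞) M)
              (Fstar (restrictProj 𝒮.incl 𝔞) M c))) ∧
    -- (2): censoring subcartesian 1-injections
    (∀ (𝒱 : Type u) (_ : Category.{u} 𝒱) (φ : 𝒱 ⥤ 𝒰) (𝔟 : GradedCat k 𝒱)
      (F : GradedFunctor k φ 𝔟 𝔞), F.Subcartesian →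
      Function.Injective (fun s : NerveTot (Sh 𝔟) 1 => NerveTot.map (sharpF F) s) →
      (∀ (X Y : Sh 𝔞) (u : X ⟶ Y),
        ¬ (∃ s : NerveTot (Sh 𝔟) 1,
            NerveTot.map (sharpF F) s = ⟨X, Y, Pth.cons u (Pth.nil Y)⟩) →
        Subsingleton (𝔞.Hom (Sh.base u) X.2 Y.2)) →
      ∀ n : ℕ,
        (∀ c c' : RawCochain M n, IsCochain M c → IsCochain M c' →
          Fstar F M c = Fstar F M c' → c = c') ∧
        (∀ c' : RawCochain (Bimod.pullback F M) n,
          IsCochain (Bimod.pullback F M) c' →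
          ∃ c : RawCochain M n, IsCochain M c ∧ Fstar F M c = c') ∧
        (∀ c : RawCochain M n,
          Fstar F M (dRaw M c) = dRaw (Bimod.pullback F M) (Fstar F M c))) := by
  constructor
  · intro 𝒮 hS n
    refine ⟨fun c c' hc hc' h => fstar_inj M (restrictProj_subcartesian 𝒮.incl 𝔞)
        (restrict_nerve_inj 𝒮) (restrict_cens 𝒮 hS) hc hc' h,
      fun c' hc' => ⟨liftCochain M (restrictProj_subcartesian 𝒮.incl 𝔞) c',
        liftCochain_isCochain M (restrictProj_subcartesian 𝒮.incl 𝔞)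
          (restrict_nerve_inj 𝒮) (restrict_cens 𝒮 hS) c' hc',
        fstar_liftCochain M (restrictProj_subcartesian 𝒮.incl 𝔞)
          (restrict_nerve_inj 𝒮) c'⟩,
      fun c => fstar_dRaw M c⟩
  · intro 𝒱 inst𝒱 φ 𝔟 F hF hinj hcens n
    refine ⟨fun c c' hc hc' h => fstar_inj M hF hinj hcens hc hc' h,
      fun c' hc' => ⟨liftCochain M hF c',
        liftCochain_isCochain M hF hinj hcens c' hc',
        fstar_liftCochain M hF hinj c'⟩,
      fun c => fstar_dRaw M c⟩

end MapGr
end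

section
/- Let (𝒵, 𝒱) be an ideal-subcategory decomposition of a small category 𝒰 with Ob(𝒱) = Ob(𝒰), let 𝔞 be a 𝒰-graded category and 𝔟 = 𝔞^φ for the inclusion φ : 𝒱 ⊆ 𝒰. Assume the ideal 𝒵 is thin: for z ∈ 𝒵(V,U) and arbitrary u' ∈ 𝒰(V',V), u ∈ 𝒰(U,U'), one has u' ∉ 𝒵 and u ∉ 𝒵. Then the functor (−)|^𝔞 : Bimod_𝒵(𝔟) → Bimod_𝒵(𝔞), which extends a 𝔟-bimodule on 𝒵 to an 𝔞-bimodule on 𝒵 by declaring the actions of morphisms of 𝒵 to be zero, and the restriction functor (−)|_𝔟 : Bimod_𝒵(𝔞) → Bimod_𝒵(𝔟), are mutually inverse isomorphisms of categories Bimod_𝒵(𝔟) ≅ Bimod_𝒵(𝔞). -/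
open CategoryTheory

universe u

namespace MapGr

variable {k : Type u} [CommRing k]
variable {𝒰 : Type u} [Category.{u} 𝒰]

/-- A wide subcategory of `𝒰` (`Ob 𝒱 = Ob 𝒰`): a class of morphisms closed under
identities and composition. -/
structure WideSubcat (𝒰 : Type u) [Category.{u} 𝒰] where
  homs : ∀ {X Y : 𝒰}, (X ⟶ Y) → Prop
  id_mem : ∀ X : 𝒰, homs (𝟙 X)
  comp_mem : ∀ {X Y Z : 𝒰} (f : X ⟶ Y) (g : Y ⟶ Z), homs f → homs g → homs (f ≫ g)

/-- A (two-sided) ideal in a category `𝒰`. -/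
structure CatIdeal (𝒰 : Type u) [Category.{u} 𝒰] where
  mem : ∀ {X Y : 𝒰}, (X ⟶ Y) → Prop
  comp_left : ∀ {X Y Z : 𝒰} (f : X ⟶ Y) (g : Y ⟶ Z), mem g → mem (f ≫ g)
  comp_right : ∀ {X Y Z : 𝒰} (f : X ⟶ Y) (g : Y ⟶ Z), mem f → mem (f ≫ g)

/-- An ideal `𝒵` is thin if it contains no consecutive morphisms. -/
def CatIdeal.Thin (Z : CatIdeal 𝒰) : Prop :=
  ∀ {V U : 𝒰} (z : V ⟶ U), Z.mem z →
    (∀ {V' : 𝒰} (u' : V' ⟶ V), ¬ Z.mem u') ∧ (∀ {U' : 𝒰} (u : U ⟶ U'), ¬ Z.mem u)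

section BimodOnIdeal

variable (k) (𝔞 : GradedCat k 𝒰) (Z : CatIdeal 𝒰) (W : WideSubcat 𝒰)

/-- An `𝔞`-bimodule on the ideal `𝒵`: `k`-modules `M_z(B, A)` for `z ∈ 𝒵` with
associative unital `k`-bilinear actions by all morphisms of `𝒰`. -/
structure BimodZa : Type (u + 1) where
  M : ∀ {X Y : 𝒰} (z : X ⟶ Y), Z.mem z → 𝔞.Obj X → 𝔞.Obj Y → ModuleCat.{u} k
  actL : ∀ {X Y Y' : 𝒰} {f : Y ⟶ Y'} {z : X ⟶ Y} {hz : Z.mem z} {B : 𝔞.Obj X}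
    {A : 𝔞.Obj Y} {A' : 𝔞.Obj Y'}, 𝔞.Hom f A A' → M z hz B A →
    M (z ≫ f) (Z.comp_right z f hz) B A'
  actR : ∀ {X Y Y' : 𝒰} {z : Y ⟶ Y'} {g : X ⟶ Y} {hz : Z.mem z} {B' : 𝔞.Obj X}
    {B : 𝔞.Obj Y} {A : 𝔞.Obj Y'}, M z hz B A → 𝔞.Hom g B' B →
    M (g ≫ z) (Z.comp_left g z hz) B' A
  actL_add_left : ∀ {X Y Y' : 𝒰} {f : Y ⟶ Y'} {z : X ⟶ Y} {hz : Z.mem z} {B A A'}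
    (x x' : 𝔞.Hom f A A') (m : M z hz B A), actL (x + x') m = actL x m + actL x' m
  actL_add_right : ∀ {X Y Y' : 𝒰} {f : Y ⟶ Y'} {z : X ⟶ Y} {hz : Z.mem z} {B A A'}
    (x : 𝔞.Hom f A A') (m m' : M z hz B A), actL x (m + m') = actL x m + actL x m'
  actL_smul_left : ∀ {X Y Y' : 𝒰} {f : Y ⟶ Y'} {z : X ⟶ Y} {hz : Z.mem z} {B A A'}
    (r : k) (x : 𝔞.Hom f A A') (m : M z hz B A), actL (r • x) m = r • actL x m
  actL_smul_right : ∀ {X Y Y' : 𝒰} {f : Y ⟶ Y'} {z : X ⟶ Y} {hz : Z.mem z} {B A A'}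
    (r : k) (x : 𝔞.Hom f A A') (m : M z hz B A), actL x (r • m) = r • actL x m
  actR_add_left : ∀ {X Y Y' : 𝒰} {z : Y ⟶ Y'} {g : X ⟶ Y} {hz : Z.mem z} {B' B A}
    (m m' : M z hz B A) (y : 𝔞.Hom g B' B), actR (m + m') y = actR m y + actR m' y
  actR_add_right : ∀ {X Y Y' : 𝒰} {z : Y ⟶ Y'} {g : X ⟶ Y} {hz : Z.mem z} {B' B A}
    (m : M z hz B A) (y y' : 𝔞.Hom g B' B), actR m (y + y') = actR m y + actR m y'
  actR_smul_left : ∀ {X Y Y' : 𝒰} {z : Y ⟶ Y'} {g : X ⟶ Y} {hz : Z.mem z} {B' B A}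
    (r : k) (m : M z hz B A) (y : 𝔞.Hom g B' B), actR (r • m) y = r • actR m y
  actR_smul_right : ∀ {X Y Y' : 𝒰} {z : Y ⟶ Y'} {g : X ⟶ Y} {hz : Z.mem z} {B' B A}
    (r : k) (m : M z hz B A) (y : 𝔞.Hom g B' B), actR m (r • y) = r • actR m y
  actL_id : ∀ {X Y : 𝒰} {z : X ⟶ Y} {hz : Z.mem z} {B A} (m : M z hz B A),
    HEq (actL (𝔞.id A) m) m
  actR_id : ∀ {X Y : 𝒰} {z : X ⟶ Y} {hz : Z.mem z} {B A} (m : M z hz B A),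
    HEq (actR m (𝔞.id B)) m
  actL_actL : ∀ {X Y Y' Y'' : 𝒰} {f' : Y' ⟶ Y''} {f : Y ⟶ Y'} {z : X ⟶ Y}
    {hz : Z.mem z} {B A A' A''} (x : 𝔞.Hom f' A' A'') (y : 𝔞.Hom f A A')
    (m : M z hz B A), HEq (actL x (actL y m)) (actL (𝔞.comp x y) m)
  actR_actR : ∀ {X X' X'' Y : 𝒰} {z : X ⟶ Y} {g : X' ⟶ X} {g' : X'' ⟶ X'}
    {hz : Z.mem z} {B'' B' B A} (m : M z hz B A) (y : 𝔞.Hom g B' B)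
    (y' : 𝔞.Hom g' B'' B'), HEq (actR (actR m y) y') (actR m (𝔞.comp y y'))
  actL_actR : ∀ {X' X Y Y' : 𝒰} {f : Y ⟶ Y'} {z : X ⟶ Y} {g : X' ⟶ X} {hz : Z.mem z}
    {B' B A A'} (x : 𝔞.Hom f A A') (m : M z hz B A) (y : 𝔞.Hom g B' B),
    HEq (actL x (actR m y)) (actR (actL x m) y)

/-- A `𝔟`-bimodule on the ideal `𝒵` (for `𝔟 = 𝔞^φ`, `φ : 𝒱 ⊆ 𝒰` a wide subcategory):
`k`-modules `M_z(B, A)` for `z ∈ 𝒵` with actions only by the morphisms of `𝒱`. -/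
structure BimodZb : Type (u + 1) where
  M : ∀ {X Y : 𝒰} (z : X ⟶ Y), Z.mem z → 𝔞.Obj X → 𝔞.Obj Y → ModuleCat.{u} k
  actL : ∀ {X Y Y' : 𝒰} {f : Y ⟶ Y'} (hf : W.homs f) {z : X ⟶ Y} {hz : Z.mem z}
    {B : 𝔞.Obj X} {A : 𝔞.Obj Y} {A' : 𝔞.Obj Y'}, 𝔞.Hom f A A' → M z hz B A →
    M (z ≫ f) (Z.comp_right z f hz) B A'
  actR : ∀ {X Y Y' : 𝒰} {z : Y ⟶ Y'} {g : X ⟶ Y} (hg : W.homs g) {hz : Z.mem z}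
    {B' : 𝔞.Obj X} {B : 𝔞.Obj Y} {A : 𝔞.Obj Y'}, M z hz B A → 𝔞.Hom g B' B →
    M (g ≫ z) (Z.comp_left g z hz) B' A
  actL_add_left : ∀ {X Y Y' : 𝒰} {f : Y ⟶ Y'} (hf : W.homs f) {z : X ⟶ Y}
    {hz : Z.mem z} {B A A'} (x x' : 𝔞.Hom f A A') (m : M z hz B A),
    actL hf (x + x') m = actL hf x m + actL hf x' m
  actL_add_right : ∀ {X Y Y' : 𝒰} {f : Y ⟶ Y'} (hf : W.homs f) {z : X ⟶ Y}
    {hz : Z.mem z} {B A A'} (x : 𝔞.Hom f A A') (m m' : M z hz B A),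
    actL hf x (m + m') = actL hf x m + actL hf x m'
  actL_smul_left : ∀ {X Y Y' : 𝒰} {f : Y ⟶ Y'} (hf : W.homs f) {z : X ⟶ Y}
    {hz : Z.mem z} {B A A'} (r : k) (x : 𝔞.Hom f A A') (m : M z hz B A),
    actL hf (r • x) m = r • actL hf x m
  actL_smul_right : ∀ {X Y Y' : 𝒰} {f : Y ⟶ Y'} (hf : W.homs f) {z : X ⟶ Y}
    {hz : Z.mem z} {B A A'} (r : k) (x : 𝔞.Hom f A A') (m : M z hz B A),
    actL hf x (r • m) = r • actL hf x m
  actR_add_left : ∀ {X Y Y' : 𝒰} {z : Y ⟶ Y'} {g : X ⟶ Y} (hg : W.homs g)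
    {hz : Z.mem z} {B' B A} (m m' : M z hz B A) (y : 𝔞.Hom g B' B),
    actR hg (m + m') y = actR hg m y + actR hg m' y
  actR_add_right : ∀ {X Y Y' : 𝒰} {z : Y ⟶ Y'} {g : X ⟶ Y} (hg : W.homs g)
    {hz : Z.mem z} {B' B A} (m : M z hz B A) (y y' : 𝔞.Hom g B' B),
    actR hg m (y + y') = actR hg m y + actR hg m y'
  actR_smul_left : ∀ {X Y Y' : 𝒰} {z : Y ⟶ Y'} {g : X ⟶ Y} (hg : W.homs g)
    {hz : Z.mem z} {B' B A} (r : k) (m : M z hz B A) (y : 𝔞.Hom g B' B),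
    actR hg (r • m) y = r • actR hg m y
  actR_smul_right : ∀ {X Y Y' : 𝒰} {z : Y ⟶ Y'} {g : X ⟶ Y} (hg : W.homs g)
    {hz : Z.mem z} {B' B A} (r : k) (m : M z hz B A) (y : 𝔞.Hom g B' B),
    actR hg m (r • y) = r • actR hg m y
  actL_id : ∀ {X Y : 𝒰} {z : X ⟶ Y} {hz : Z.mem z} {B A} (m : M z hz B A),
    HEq (actL (W.id_mem Y) (𝔞.id A) m) m
  actR_id : ∀ {X Y : 𝒰} {z : X ⟶ Y} {hz : Z.mem z} {B A} (m : M z hz B A),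
    HEq (actR (W.id_mem X) m (𝔞.id B)) m
  actL_actL : ∀ {X Y Y' Y'' : 𝒰} {f' : Y' ⟶ Y''} {f : Y ⟶ Y'} (hf' : W.homs f')
    (hf : W.homs f) {z : X ⟶ Y} {hz : Z.mem z} {B A A' A''} (x : 𝔞.Hom f' A' A'')
    (y : 𝔞.Hom f A A') (m : M z hz B A),
    HEq (actL hf' x (actL hf y m)) (actL (W.comp_mem f f' hf hf') (𝔞.comp x y) m)
  actR_actR : ∀ {X X' X'' Y : 𝒰} {z : X ⟶ Y} {g : X' ⟶ X} {g' : X'' ⟶ X'}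
    (hg : W.homs g) (hg' : W.homs g') {hz : Z.mem z} {B'' B' B A} (m : M z hz B A)
    (y : 𝔞.Hom g B' B) (y' : 𝔞.Hom g' B'' B'),
    HEq (actR hg' (actR hg m y) y') (actR (W.comp_mem g' g hg' hg) m (𝔞.comp y y'))
  actL_actR : ∀ {X' X Y Y' : 𝒰} {f : Y ⟶ Y'} {z : X ⟶ Y} {g : X' ⟶ X}
    (hf : W.homs f) (hg : W.homs g) {hz : Z.mem z} {B' B A A'} (x : 𝔞.Hom f A A')
    (m : M z hz B A) (y : 𝔞.Hom g B' B),
    HEq (actL hf x (actR hg m y)) (actR hg (actL hf x m) y)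

variable {k 𝔞 Z W}

/-- Morphisms of `𝔞`-bimodules on `𝒵`. -/
@[ext]
structure BimodZaHom (N N' : BimodZa k 𝔞 Z) where
  app : ∀ {X Y : 𝒰} (z : X ⟶ Y) (hz : Z.mem z) (B : 𝔞.Obj X) (A : 𝔞.Obj Y),
    N.M z hz B A → N'.M z hz B A
  app_add : ∀ {X Y : 𝒰} (z : X ⟶ Y) (hz : Z.mem z) (B A) (m m' : N.M z hz B A),
    app z hz B A (m + m') = app z hz B A m + app z hz B A m'
  app_smul : ∀ {X Y : 𝒰} (z : X ⟶ Y) (hz : Z.mem z) (B A) (r : k)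
    (m : N.M z hz B A), app z hz B A (r • m) = r • app z hz B A m
  app_actL : ∀ {X Y Y' : 𝒰} {f : Y ⟶ Y'} {z : X ⟶ Y} (hz : Z.mem z) {B A A'}
    (x : 𝔞.Hom f A A') (m : N.M z hz B A),
    app _ _ _ _ (N.actL x m) = N'.actL x (app z hz B A m)
  app_actR : ∀ {X Y Y' : 𝒰} {z : Y ⟶ Y'} {g : X ⟶ Y} (hz : Z.mem z) {B' B A}
    (m : N.M z hz B A) (y : 𝔞.Hom g B' B),
    app _ _ _ _ (N.actR m y) = N'.actR (app z hz B A m) y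

/-- Morphisms of `𝔟`-bimodules on `𝒵`. -/
@[ext]
structure BimodZbHom (N N' : BimodZb k 𝔞 Z W) where
  app : ∀ {X Y : 𝒰} (z : X ⟶ Y) (hz : Z.mem z) (B : 𝔞.Obj X) (A : 𝔞.Obj Y),
    N.M z hz B A → N'.M z hz B A
  app_add : ∀ {X Y : 𝒰} (z : X ⟶ Y) (hz : Z.mem z) (B A) (m m' : N.M z hz B A),
    app z hz B A (m + m') = app z hz B A m + app z hz B A m'
  app_smul : ∀ {X Y : 𝒰} (z : X ⟶ Y) (hz : Z.mem z) (B A) (r : k)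
    (m : N.M z hz B A), app z hz B A (r • m) = r • app z hz B A m
  app_actL : ∀ {X Y Y' : 𝒰} {f : Y ⟶ Y'} (hf : W.homs f) {z : X ⟶ Y}
    (hz : Z.mem z) {B A A'} (x : 𝔞.Hom f A A') (m : N.M z hz B A),
    app _ _ _ _ (N.actL hf x m) = N'.actL hf x (app z hz B A m)
  app_actR : ∀ {X Y Y' : 𝒰} {z : Y ⟶ Y'} {g : X ⟶ Y} (hg : W.homs g)
    (hz : Z.mem z) {B' B A} (m : N.M z hz B A) (y : 𝔞.Hom g B' B),
    app _ _ _ _ (N.actR hg m y) = N'.actR hg (app z hz B A m) y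

instance : Category.{u} (BimodZa k 𝔞 Z) where
  Hom N N' := BimodZaHom N N'
  id N :=
    { app := fun z hz B A m => m
      app_add := by intros; rfl
      app_smul := by intros; rfl
      app_actL := by intros; rfl
      app_actR := by intros; rfl }
  comp T T' :=
    { app := fun z hz B A m => T'.app z hz B A (T.app z hz B A m)
      app_add := by intros; (try dsimp only); rw [T.app_add, T'.app_add]
      app_smul := by intros; (try dsimp only); rw [T.app_smul, T'.app_smul]
      app_actL := by intros; (try dsimp only); rw [T.app_actL, T'.app_actL]
      app_actR := by intros; (try dsimp only); rw [T.app_actR, T'.app_actR] }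
  id_comp T := rfl
  comp_id T := rfl
  assoc T T' T'' := rfl

instance : Category.{u} (BimodZb k 𝔞 Z W) where
  Hom N N' := BimodZbHom N N'
  id N :=
    { app := fun z hz B A m => m
      app_add := by intros; rfl
      app_smul := by intros; rfl
      app_actL := by intros; rfl
      app_actR := by intros; rfl }
  comp T T' :=
    { app := fun z hz B A m => T'.app z hz B A (T.app z hz B A m)
      app_add := by intros; (try dsimp only); rw [T.app_add, T'.app_add]
      app_smul := by intros; (try dsimp only); rw [T.app_smul, T'.app_smul]
      app_actL := by intros; (try dsimp only); rw [T.app_actL, T'.app_actL]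
      app_actR := by intros; (try dsimp only); rw [T.app_actR, T'.app_actR] }
  id_comp T := rfl
  comp_id T := rfl
  assoc T T' T'' := rfl

/-- The restriction functor `(−)|_𝔟 : Bimod_𝒵(𝔞) → Bimod_𝒵(𝔟)`. -/
def restrictZ : BimodZa k 𝔞 Z ⥤ BimodZb k 𝔞 Z W where
  obj N :=
    { M := N.M
      actL := fun {X Y Y' f} _hf {z hz B A A'} x m => N.actL x m
      actR := fun {X Y Y' z g} _hg {hz B' B A} m y => N.actR m y
      actL_add_left := by intro X Y Y' f hf z hz B A A' x x' m
                          exact N.actL_add_left x x' m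
      actL_add_right := by intro X Y Y' f hf z hz B A A' x m m'
                           exact N.actL_add_right x m m'
      actL_smul_left := by intro X Y Y' f hf z hz B A A' r x m
                           exact N.actL_smul_left r x m
      actL_smul_right := by intro X Y Y' f hf z hz B A A' r x m
                            exact N.actL_smul_right r x m
      actR_add_left := by intro X Y Y' z g hg hz B' B A m m' y
                          exact N.actR_add_left m m' y
      actR_add_right := by intro X Y Y' z g hg hz B' B A m y y'
                           exact N.actR_add_right m y y'
      actR_smul_left := by intro X Y Y' z g hg hz B' B A r m y
                           exact N.actR_smul_left r m y
      actR_smul_right := by intro X Y Y' z g hg hz B' B A r m y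
                            exact N.actR_smul_right r m y
      actL_id := by intro X Y z hz B A m; exact N.actL_id m
      actR_id := by intro X Y z hz B A m; exact N.actR_id m
      actL_actL := by intro X Y Y' Y'' f' f hf' hf z hz B A A' A'' x y m
                      exact N.actL_actL x y m
      actR_actR := by intro X X' X'' Y z g g' hg hg' hz B'' B' B A m y y'
                      exact N.actR_actR m y y'
      actL_actR := by intro X' X Y Y' f z g hf hg hz B' B A A' x m y
                      exact N.actL_actR x m y }
  map T :=
    { app := T.app
      app_add := T.app_add
      app_smul := T.app_smul
      app_actL := by intro X Y Y' f hf z hz B A A' x m; exact T.app_actL hz x m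
      app_actR := by intro X Y Y' z g hg hz B' B A m y; exact T.app_actR hz m y }
  map_id _ := rfl
  map_comp _ _ := rfl

end BimodOnIdeal

section Extension

variable {𝔞 : GradedCat k 𝒰} {Z : CatIdeal 𝒰} {W : WideSubcat 𝒰}

theorem BimodZb.actL_zero (N : BimodZb k 𝔞 Z W) {X Y Y' : 𝒰} {f : Y ⟶ Y'}
    (hf : W.homs f) {z : X ⟶ Y} {hz : Z.mem z} {B A A'} (x : 𝔞.Hom f A A') :
    N.actL hf x (0 : N.M z hz B A) = 0 := by
  have h := N.actL_add_right hf x (0 : N.M z hz B A) 0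
  rw [add_zero] at h
  exact left_eq_add.mp h

theorem BimodZb.actR_zero (N : BimodZb k 𝔞 Z W) {X Y Y' : 𝒰} {z : Y ⟶ Y'}
    {g : X ⟶ Y} (hg : W.homs g) {hz : Z.mem z} {B' B A} (y : 𝔞.Hom g B' B) :
    N.actR hg (0 : N.M z hz B A) y = 0 := by
  have h := N.actR_add_left hg (0 : N.M z hz B A) 0 y
  rw [add_zero] at h
  exact left_eq_add.mp h

theorem BimodZbHom.app_zero {N N' : BimodZb k 𝔞 Z W} (T : BimodZbHom N N')
    {X Y : 𝒰} (z : X ⟶ Y) (hz : Z.mem z) (B A) :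
    T.app z hz B A 0 = 0 := by
  have h := T.app_add z hz B A 0 0
  rw [add_zero] at h
  exact left_eq_add.mp h

theorem zaheq {N : BimodZa k 𝔞 Z} {X Y : 𝒰} {z z' : X ⟶ Y} (h : z = z')
    {hz : Z.mem z} {hz' : Z.mem z'} {B A} {m : N.M z hz B A} {m' : N.M z' hz' B A}
    (hmm : HEq m m') : HEq m m' := hmm

theorem heq_zero_zero {N : BimodZb k 𝔞 Z W} {X Y : 𝒰} {z z' : X ⟶ Y} (h : z = z')
    (hz : Z.mem z) (hz' : Z.mem z') {B A} :
    HEq (0 : N.M z hz B A) (0 : N.M z' hz' B A) := by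
  subst h; rfl

variable (hdec : ∀ {X Y : 𝒰} (f : X ⟶ Y), (W.homs f ∨ Z.mem f) ∧ ¬ (W.homs f ∧ Z.mem f))

open Classical in
/-- The extended left action: zero on the morphisms of `𝒵`. -/
noncomputable def eactL (N : BimodZb k 𝔞 Z W) {X Y Y' : 𝒰} {f : Y ⟶ Y'} {z : X ⟶ Y}
    {hz : Z.mem z} {B A A'} (x : 𝔞.Hom f A A') (m : N.M z hz B A) :
    N.M (z ≫ f) (Z.comp_right z f hz) B A' :=
  if hf : W.homs f then N.actL hf x m else 0

open Classical in
/-- The extended right action: zero on the morphisms of `𝒵`. -/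
noncomputable def eactR (N : BimodZb k 𝔞 Z W) {X Y Y' : 𝒰} {z : Y ⟶ Y'} {g : X ⟶ Y}
    {hz : Z.mem z} {B' B A} (m : N.M z hz B A) (y : 𝔞.Hom g B' B) :
    N.M (g ≫ z) (Z.comp_left g z hz) B' A :=
  if hg : W.homs g then N.actR hg m y else 0

theorem eactL_heq_congr {N : BimodZb k 𝔞 Z W} {X Y : 𝒰} {z z' : X ⟶ Y} (h : z = z')
    {hz : Z.mem z} {hz' : Z.mem z'} {B A} {m : N.M z hz B A} {m' : N.M z' hz' B A}
    (hm : HEq m m') : True := trivial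

end Extension

end MapGr

namespace MapGr

variable {k : Type u} [CommRing k]
variable {𝒰 : Type u} [Category.{u} 𝒰]
variable {𝔞 : GradedCat k 𝒰} {Z : CatIdeal 𝒰} {W : WideSubcat 𝒰}

/-- The extension functor `(−)|^𝔞 : Bimod_𝒵(𝔟) → Bimod_𝒵(𝔞)`, extending a
`𝔟`-bimodule on `𝒵` to an `𝔞`-bimodule on `𝒵` by letting the morphisms of `𝒵` act by
zero. -/
noncomputable def extendZ
    (hdec : ∀ {X Y : 𝒰} (f : X ⟶ Y), (W.homs f ∨ Z.mem f) ∧ ¬ (W.homs f ∧ Z.mem f)) :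
    BimodZb k 𝔞 Z W ⥤ BimodZa k 𝔞 Z where
  obj N :=
    { M := N.M
      actL := fun {X Y Y' f z hz B A A'} x m => eactL N x m
      actR := fun {X Y Y' z g hz B' B A} m y => eactR N m y
      actL_add_left := by
        intro X Y Y' f z hz B A A' x x' m
        (try dsimp only); simp only [eactL]
        by_cases hf : W.homs f
        · simp only [dif_pos hf]; exact N.actL_add_left hf x x' m
        · simp only [dif_neg hf]; simp
      actL_add_right := by
        intro X Y Y' f z hz B A A' x m m'
        (try dsimp only); simp only [eactL]
        by_cases hf : W.homs f
        · simp only [dif_pos hf]; exact N.actL_add_right hf x m m'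
        · simp only [dif_neg hf]; simp
      actL_smul_left := by
        intro X Y Y' f z hz B A A' r x m
        (try dsimp only); simp only [eactL]
        by_cases hf : W.homs f
        · simp only [dif_pos hf]; exact N.actL_smul_left hf r x m
        · simp only [dif_neg hf]; simp
      actL_smul_right := by
        intro X Y Y' f z hz B A A' r x m
        (try dsimp only); simp only [eactL]
        by_cases hf : W.homs f
        · simp only [dif_pos hf]; exact N.actL_smul_right hf r x m
        · simp only [dif_neg hf]; simp
      actR_add_left := by
        intro X Y Y' z g hz B' B A m m' y
        (try dsimp only); simp only [eactR]
        by_cases hg : W.homs g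
        · simp only [dif_pos hg]; exact N.actR_add_left hg m m' y
        · simp only [dif_neg hg]; simp
      actR_add_right := by
        intro X Y Y' z g hz B' B A m y y'
        (try dsimp only); simp only [eactR]
        by_cases hg : W.homs g
        · simp only [dif_pos hg]; exact N.actR_add_right hg m y y'
        · simp only [dif_neg hg]; simp
      actR_smul_left := by
        intro X Y Y' z g hz B' B A r m y
        (try dsimp only); simp only [eactR]
        by_cases hg : W.homs g
        · simp only [dif_pos hg]; exact N.actR_smul_left hg r m y
        · simp only [dif_neg hg]; simp
      actR_smul_right := by
        intro X Y Y' z g hz B' B A r m y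
        (try dsimp only); simp only [eactR]
        by_cases hg : W.homs g
        · simp only [dif_pos hg]; exact N.actR_smul_right hg r m y
        · simp only [dif_neg hg]; simp
      actL_id := by
        intro X Y z hz B A m
        (try dsimp only); simp only [eactL]
        simp only [dif_pos (W.id_mem Y)]
        exact N.actL_id m
      actR_id := by
        intro X Y z hz B A m
        (try dsimp only); simp only [eactR]
        simp only [dif_pos (W.id_mem X)]
        exact N.actR_id m
      actL_actL := by
        intro X Y Y' Y'' f' f z hz B A A' A'' x y m
        (try dsimp only); simp only [eactL]
        by_cases hf : W.homs f
        · by_cases hf' : W.homs f'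
          · simp only [dif_pos hf, dif_pos hf', dif_pos (W.comp_mem f f' hf hf')]
            exact N.actL_actL hf' hf x y m
          · have hc : ¬ W.homs (f ≫ f') := by
              intro hc
              have hf'Z : Z.mem f' := (hdec f').1.resolve_left hf'
              exact (hdec (f ≫ f')).2 ⟨hc, Z.comp_left f f' hf'Z⟩
            simp only [dif_pos hf, dif_neg hf', dif_neg hc]
            exact heq_zero_zero (by simp) _ _
        · have hfZ : Z.mem f := (hdec f).1.resolve_left hf
          have hc : ¬ W.homs (f ≫ f') := by
            intro hc
            exact (hdec (f ≫ f')).2 ⟨hc, Z.comp_right f f' hfZ⟩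
          simp only [dif_neg hf, dif_neg hc]
          by_cases hf' : W.homs f'
          · rw [dif_pos hf', N.actL_zero hf' x]
            exact heq_zero_zero (by simp) _ _
          · simp only [dif_neg hf']
            exact heq_zero_zero (by simp) _ _
      actR_actR := by
        intro X X' X'' Y z g g' hz B'' B' B A m y y'
        (try dsimp only); simp only [eactR]
        by_cases hg : W.homs g
        · by_cases hg' : W.homs g'
          · simp only [dif_pos hg, dif_pos hg', dif_pos (W.comp_mem g' g hg' hg)]
            exact N.actR_actR hg hg' m y y'
          · have hc : ¬ W.homs (g' ≫ g) := by
              intro hc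
              have hZ : Z.mem g' := (hdec g').1.resolve_left hg'
              exact (hdec (g' ≫ g)).2 ⟨hc, Z.comp_right g' g hZ⟩
            simp only [dif_pos hg, dif_neg hg', dif_neg hc]
            exact heq_zero_zero (by simp) _ _
        · have hgZ : Z.mem g := (hdec g).1.resolve_left hg
          have hc : ¬ W.homs (g' ≫ g) := by
            intro hc
            exact (hdec (g' ≫ g)).2 ⟨hc, Z.comp_left g' g hgZ⟩
          simp only [dif_neg hg, dif_neg hc]
          by_cases hg' : W.homs g'
          · rw [dif_pos hg', N.actR_zero hg' y']
            exact heq_zero_zero (by simp) _ _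
          · simp only [dif_neg hg']
            exact heq_zero_zero (by simp) _ _
      actL_actR := by
        intro X' X Y Y' f z g hz B' B A A' x m y
        (try dsimp only); simp only [eactL, eactR]
        by_cases hf : W.homs f
        · by_cases hg : W.homs g
          · simp only [dif_pos hf, dif_pos hg]
            exact N.actL_actR hf hg x m y
          · simp only [dif_neg hg]
            rw [dif_pos hf, N.actL_zero hf x]
            exact heq_zero_zero (by simp) _ _
        · by_cases hg : W.homs g
          · simp only [dif_neg hf]
            rw [dif_pos hg, N.actR_zero hg y]
            exact heq_zero_zero (by simp) _ _
          · simp only [dif_neg hf, dif_neg hg]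
            exact heq_zero_zero (by simp) _ _ }
  map {N N'} T :=
    { app := T.app
      app_add := T.app_add
      app_smul := T.app_smul
      app_actL := by
        intro X Y Y' f z hz B A A' x m
        (try dsimp only); simp only [eactL]
        by_cases hf : W.homs f
        · simp only [dif_pos hf]
          exact T.app_actL hf hz x m
        · simp only [dif_neg hf]
          exact T.app_zero _ _ _ _
      app_actR := by
        intro X Y Y' z g hz B' B A m y
        (try dsimp only); simp only [eactR]
        by_cases hg : W.homs g
        · simp only [dif_pos hg]
          exact T.app_actR hg hz m y
        · simp only [dif_neg hg]
          exact T.app_zero _ _ _ _ }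
  map_id _ := rfl
  map_comp _ _ := rfl

theorem zbExtAux {N N' : BimodZb k 𝔞 Z W}
    (hM : @BimodZb.M k _ 𝒰 _ 𝔞 Z W N = @BimodZb.M k _ 𝒰 _ 𝔞 Z W N')
    (hL : HEq (@BimodZb.actL k _ 𝒰 _ 𝔞 Z W N) (@BimodZb.actL k _ 𝒰 _ 𝔞 Z W N'))
    (hR : HEq (@BimodZb.actR k _ 𝒰 _ 𝔞 Z W N) (@BimodZb.actR k _ 𝒰 _ 𝔞 Z W N')) :
    N = N' := by
  cases N with
  | mk M1 L1 R1 p1 p2 p3 p4 p5 p6 p7 p8 p9 p10 p11 p12 p13 =>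
  cases N' with
  | mk M2 L2 R2 q1 q2 q3 q4 q5 q6 q7 q8 q9 q10 q11 q12 q13 =>
  simp only at hM
  cases hM
  simp only at hL
  cases hL
  simp only at hR
  cases hR
  rfl

theorem zaExtAux {N N' : BimodZa k 𝔞 Z}
    (hM : @BimodZa.M k _ 𝒰 _ 𝔞 Z N = @BimodZa.M k _ 𝒰 _ 𝔞 Z N')
    (hL : HEq (@BimodZa.actL k _ 𝒰 _ 𝔞 Z N) (@BimodZa.actL k _ 𝒰 _ 𝔞 Z N'))
    (hR : HEq (@BimodZa.actR k _ 𝒰 _ 𝔞 Z N) (@BimodZa.actR k _ 𝒰 _ 𝔞 Z N')) :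
    N = N' := by
  cases N with
  | mk M1 L1 R1 p1 p2 p3 p4 p5 p6 p7 p8 p9 p10 p11 p12 p13 =>
  cases N' with
  | mk M2 L2 R2 q1 q2 q3 q4 q5 q6 q7 q8 q9 q10 q11 q12 q13 =>
  simp only at hM
  cases hM
  simp only at hL
  cases hL
  simp only at hR
  cases hR
  rfl

theorem zbHomExtAux {N N' : BimodZb k 𝔞 Z W} {T T' : BimodZbHom N N'}
    (h : @BimodZbHom.app k _ 𝒰 _ 𝔞 Z W N N' T = @BimodZbHom.app k _ 𝒰 _ 𝔞 Z W N N' T') : T = T' := by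
  cases T; cases T'
  obtain rfl := h
  rfl

theorem zaHomExtAux {N N' : BimodZa k 𝔞 Z} {T T' : BimodZaHom N N'}
    (h : @BimodZaHom.app k _ 𝒰 _ 𝔞 Z N N' T = @BimodZaHom.app k _ 𝒰 _ 𝔞 Z N N' T') : T = T' := by
  cases T; cases T'
  obtain rfl := h
  rfl

theorem zbEqToHomApp {N N' : BimodZb k 𝔞 Z W} (h : N = N') {X Y : 𝒰}
    (z : X ⟶ Y) (hz : Z.mem z) (B A) (m : N.M z hz B A) :
    HEq ((eqToHom h).app z hz B A m) m := by
  subst h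
  rw [eqToHom_refl]
  exact HEq.rfl

theorem zaEqToHomApp {N N' : BimodZa k 𝔞 Z} (h : N = N') {X Y : 𝒰}
    (z : X ⟶ Y) (hz : Z.mem z) (B A) (m : N.M z hz B A) :
    HEq ((eqToHom h).app z hz B A m) m := by
  subst h
  rw [eqToHom_refl]
  exact HEq.rfl

/-- Let `(𝒵, 𝒱)` be an ideal-subcategory decomposition of `𝒰` with `Ob 𝒱 = Ob 𝒰`, let
`𝔞` be a `𝒰`-graded category and `𝔟 = 𝔞^φ` the restriction along `φ : 𝒱 ⊆ 𝒰`, and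
assume the ideal `𝒵` is thin.  Then the extension functor
`(−)|^𝔞 : Bimod_𝒵(𝔟) → Bimod_𝒵(𝔞)` (extending the actions by zero on the morphisms of
`𝒵`) and the restriction functor `(−)|_𝔟 : Bimod_𝒵(𝔞) → Bimod_𝒵(𝔟)` are mutually
inverse isomorphisms of categories `Bimod_𝒵(𝔟) ≅ Bimod_𝒵(𝔞)`. -/
theorem statement18 (𝔞 : GradedCat k 𝒰) (Z : CatIdeal 𝒰) (W : WideSubcat 𝒰)
    (hdec : ∀ {X Y : 𝒰} (f : X ⟶ Y), (W.homs f ∨ Z.mem f) ∧ ¬ (W.homs f ∧ Z.mem f))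
    (hthin : Z.Thin) :
    extendZ (𝔞 := 𝔞) hdec ⋙ restrictZ = 𝟭 (BimodZb k 𝔞 Z W) ∧
    restrictZ ⋙ extendZ (𝔞 := 𝔞) hdec = 𝟭 (BimodZa k 𝔞 Z) := by
  constructor
  · -- direction 𝔟 → 𝔞 → 𝔟
    have hobj : ∀ N : BimodZb k 𝔞 Z W,
        (extendZ (𝔞 := 𝔞) hdec ⋙ restrictZ).obj N = N := by
      intro N
      refine zbExtAux ?_ ?_ ?_
      · rfl
      · apply heq_of_eq
        funext X Y Y' f hf z hz B A A' x m
        show eactL N x m = N.actL hf x m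
        unfold eactL; rw [dif_pos hf]
      · apply heq_of_eq
        funext X Y Y' z g hg hz B' B A m y
        show eactR N m y = N.actR hg m y
        unfold eactR; rw [dif_pos hg]
    refine CategoryTheory.Functor.ext hobj ?_
    intro N N' T
    apply zbHomExtAux
    funext X Y z hz B A m
    show T.app z hz B A m =
      (eqToHom ((hobj N').symm)).app z hz B A
        (T.app z hz B A ((eqToHom (hobj N)).app z hz B A m))
    have e1 : (eqToHom (hobj N)).app z hz B A m = m :=
      eq_of_heq (zbEqToHomApp (hobj N) z hz B A m)
    rw [e1]
    exact (eq_of_heq (zbEqToHomApp ((hobj N').symm) z hz B A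
      (T.app z hz B A m))).symm
  · -- direction 𝔞 → 𝔟 → 𝔞
    have hobj : ∀ N : BimodZa k 𝔞 Z,
        (restrictZ ⋙ extendZ (𝔞 := 𝔞) hdec).obj N = N := by
      intro N
      refine zaExtAux ?_ ?_ ?_
      · rfl
      · apply heq_of_eq
        funext X Y Y' f z hz B A A' x m
        have hf : W.homs f := (hdec f).1.resolve_right ((hthin z hz).2 f)
        show eactL ((restrictZ (W := W)).obj N) x m = N.actL x m
        unfold eactL; rw [dif_pos hf]
        rfl
      · apply heq_of_eq
        funext X Y Y' z g hz B' B A m y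
        have hg : W.homs g := (hdec g).1.resolve_right ((hthin z hz).1 g)
        show eactR ((restrictZ (W := W)).obj N) m y = N.actR m y
        unfold eactR; rw [dif_pos hg]
        rfl
    refine CategoryTheory.Functor.ext hobj ?_
    intro N N' T
    apply zaHomExtAux
    funext X Y z hz B A m
    show T.app z hz B A m =
      (eqToHom ((hobj N').symm)).app z hz B A
        (T.app z hz B A ((eqToHom (hobj N)).app z hz B A m))
    have e1 : (eqToHom (hobj N)).app z hz B A m = m :=
      eq_of_heq (zaEqToHomApp (hobj N) z hz B A m)
    rw [e1]
    exact (eq_of_heq (zaEqToHomApp ((hobj N').symm) z hz B A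
      (T.app z hz B A m))).symm

end MapGr
end
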